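/- arXiv:1909.03257 — 4 statements merged into one kernel-verified Lean document; each statement's English description precedes it below -/
import Mathlib

section
/- Let (η_i)_{i≥0} and (θ_j)_{j≥0} be sequences of pairwise distinct complex numbers, N ≥ 1 with associated integers d, m, and Ω_N, 𝒫_N as in the bidimensional intertwining setting. If (η_p,θ_q) ∈ Ω_N with 0 ≤ p+q ≤ d−2, 0 ≤ p ≤ m−1 and 0 ≤ q ≤ d−m−1, then for all (z,w) ∈ ℂ²: l^{(N)}_{(η_p,θ_q)}(z,w) = ∏_{i=0}^{p−1} (z−η_i)/(η_p−η_i) ∏_{j=0,j≠q}^{d−p} (w−θ_j)/(θ_q−θ_j) − ∏_{i=0}^{p−1} (z−η_i)/(η_p−η_i) ∏_{j=0,j≠q}^{d−p−1} (w−θ_j)/(θ_q−θ_j) + ∏_{i=0,i≠p}^{p+1} (z−η_i)/(η_p−η_i) ∏_{j=0,j≠q}^{d−p−1} (w−θ_j)/(θ_q−θ_j) + Σ_{r=1}^{m−p−1} [∏_{i=0,i≠p}^{p+r+1} (z−η_i)/(η_p−η_i) ∏_{j=0,j≠q}^{d−p−r−1} (w−θ_j)/(θ_q−θ_j) − ∏_{i=0,i≠p}^{p+r}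 (z−η_i)/(η_p−η_i) ∏_{j=0,j≠q}^{d−p−r−1} (w−θ_j)/(θ_q−θ_j)] + Σ_{r=m−p}^{d−p−q−2} [∏_{i=0,i≠p}^{p+r+1} (z−η_i)/(η_p−η_i) ∏_{j=0,j≠q}^{d−p−r−2} (w−θ_j)/(θ_q−θ_j) − ∏_{i=0,i≠p}^{p+r} (z−η_i)/(η_p−η_i) ∏_{j=0,j≠q}^{d−p−r−2} (w−θ_j)/(θ_q−θ_j)]. -/
open Finset
open Polynomial

/-- The index set of both `Ω_N` and the monomials spanning `𝒫_N` in the bidimensional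
intertwining setting with parameters `d`, `m`: pairs `(k,l)` with `k+l < d`, or
`k+l = d` and `k ≤ m`. -/
def BidIdx (d m : ℕ) (p : ℕ × ℕ) : Prop :=
  p.1 + p.2 < d ∨ (p.1 + p.2 = d ∧ p.1 ≤ m)

/-- The polynomial space `𝒫_N` (as a space of functions on `ℂ²`): the span of the
monomials `z^k w^l` with `(k,l)` in the index set. -/
noncomputable def PolySpace (d m : ℕ) : Submodule ℂ ((ℂ × ℂ) → ℂ) :=
  Submodule.span ℂ
    {f | ∃ k l : ℕ, BidIdx d m (k, l) ∧ f = fun p : ℂ × ℂ => p.1 ^ k * p.2 ^ l}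

/-- `L` is the fundamental Lagrange interpolation polynomial (FLIP) of the point
`(η_p, θ_q)` of `Ω_N`: it belongs to `𝒫_N`, equals `1` at `(η_p, θ_q)` and `0` at
every other point of `Ω_N`. -/
def IsFLIP (η θ : ℕ → ℂ) (d m : ℕ) (p q : ℕ) (L : (ℂ × ℂ) → ℂ) : Prop :=
  L ∈ PolySpace d m ∧ L (η p, θ q) = 1 ∧
    ∀ k l : ℕ, BidIdx d m (k, l) → (k, l) ≠ (p, q) → L (η k, θ l) = 0

lemma bidIdx_mono {d m a b k l : ℕ} (h : BidIdx d m (a, b)) (hk : k ≤ a) (hl : l ≤ b) :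
    BidIdx d m (k, l) := by
  rcases h with h | ⟨h1, h2⟩
  · exact Or.inl (by omega)
  · rcases lt_or_eq_of_le (Nat.add_le_add hk hl) with h' | h'
    · exact Or.inl (by omega)
    · exact Or.inr ⟨by omega, by omega⟩

lemma tele (f : ℕ → ℂ) (a : ℕ) : ∀ b, a ≤ b →
    ∑ r ∈ Ico a b, (f (r + 1) - f r) = f b - f a := by
  intro b hb
  induction b, hb using Nat.le_induction with
  | base => simp
  | succ b hb ih => rw [Finset.sum_Ico_succ_top hb, ih]; ring

noncomputable def AA (η : ℕ → ℂ) (p s : ℕ) (z : ℂ) : ℂ :=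
  ∏ i ∈ (range s).erase p, (z - η i) / (η p - η i)

lemma AA_self (η : ℕ → ℂ) (hη : Function.Injective η) (p s : ℕ) : AA η p s (η p) = 1 := by
  refine Finset.prod_eq_one fun i hi => ?_
  have : i ≠ p := Finset.ne_of_mem_erase hi
  exact div_self (sub_ne_zero.2 fun h => this (hη h.symm))

lemma AA_zero (η : ℕ → ℂ) (p s k : ℕ) (hk : k ≠ p) (hks : k < s) : AA η p s (η k) = 0 := by
  refine Finset.prod_eq_zero (Finset.mem_erase.2 ⟨hk, Finset.mem_range.2 hks⟩) ?_
  simp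

noncomputable def AP (η : ℕ → ℂ) (p s : ℕ) : Polynomial ℂ :=
  ∏ i ∈ (range s).erase p, (Polynomial.C ((η p - η i)⁻¹) * (Polynomial.X - Polynomial.C (η i)))

lemma AP_eval (η : ℕ → ℂ) (p s : ℕ) (z : ℂ) : (AP η p s).eval z = AA η p s z := by
  rw [AP, AA, Polynomial.eval_prod]
  refine Finset.prod_congr rfl fun i _ => ?_
  simp [div_eq_mul_inv, mul_comm]

lemma AP_natDegree_le (η : ℕ → ℂ) (p s : ℕ) :
    (AP η p s).natDegree ≤ ((range s).erase p).card := by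
  refine le_trans (Polynomial.natDegree_prod_le _ _) ?_
  calc ∑ i ∈ (range s).erase p, (Polynomial.C ((η p - η i)⁻¹) * (Polynomial.X - Polynomial.C (η i))).natDegree
      ≤ ∑ _i ∈ (range s).erase p, 1 := by
        refine Finset.sum_le_sum fun i _ => ?_
        refine le_trans (Polynomial.natDegree_mul_le) ?_
        simp [Polynomial.natDegree_X_sub_C]
    _ = _ := by simp

lemma card_erase_range_of_lt {p s : ℕ} (h : p < s) : ((range s).erase p).card = s - 1 := by
  rw [Finset.card_erase_of_mem (Finset.mem_range.2 h), Finset.card_range]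

lemma card_erase_range_of_le {p s : ℕ} (h : s ≤ p) : ((range s).erase p).card = s := by
  rw [Finset.erase_eq_of_notMem (by simp [Finset.mem_range]; omega), Finset.card_range]

lemma AP_natDegree_le_of_lt {η : ℕ → ℂ} {p s : ℕ} (h : p < s) :
    (AP η p s).natDegree ≤ s - 1 :=
  le_trans (AP_natDegree_le η p s) (card_erase_range_of_lt h).le

lemma AP_natDegree_le_of_le {η : ℕ → ℂ} {p s : ℕ} (h : s ≤ p) :
    (AP η p s).natDegree ≤ s :=
  le_trans (AP_natDegree_le η p s) (card_erase_range_of_le h).le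

lemma prod_mem_polySpace (d m a b : ℕ) (h : BidIdx d m (a, b)) (P Q : Polynomial ℂ)
    (hP : P.natDegree ≤ a) (hQ : Q.natDegree ≤ b) :
    (fun zw : ℂ × ℂ => P.eval zw.1 * Q.eval zw.2) ∈ PolySpace d m := by
  have key : (fun zw : ℂ × ℂ => P.eval zw.1 * Q.eval zw.2) =
      ∑ k ∈ range (a + 1), ∑ l ∈ range (b + 1),
        (P.coeff k * Q.coeff l) • (fun zw : ℂ × ℂ => zw.1 ^ k * zw.2 ^ l) := by
    funext zw
    rw [Polynomial.eval_eq_sum_range' (Nat.lt_succ_of_le hP),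
        Polynomial.eval_eq_sum_range' (Nat.lt_succ_of_le hQ), Finset.sum_mul_sum]
    simp only [Finset.sum_apply, Pi.smul_apply, smul_eq_mul]
    refine Finset.sum_congr rfl fun k _ => Finset.sum_congr rfl fun l _ => by ring
  rw [key]
  refine Submodule.sum_mem _ fun k hk => Submodule.sum_mem _ fun l hl => ?_
  refine Submodule.smul_mem _ _ (Submodule.subset_span ?_)
  exact ⟨k, l, bidIdx_mono h (Nat.lt_succ_iff.1 (Finset.mem_range.1 hk))
    (Nat.lt_succ_iff.1 (Finset.mem_range.1 hl)), rfl⟩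

/-- Products of `AA` factors, as functions on `ℂ²`, lie in `𝒫_N`. -/
lemma AA_prod_mem_polySpace (η θ : ℕ → ℂ) (d m a b p q s t : ℕ) (h : BidIdx d m (a, b))
    (hs : (AP η p s).natDegree ≤ a) (ht : (AP θ q t).natDegree ≤ b) :
    (fun zw : ℂ × ℂ => AA η p s zw.1 * AA θ q t zw.2) ∈ PolySpace d m := by
  have := prod_mem_polySpace d m a b h (AP η p s) (AP θ q t) hs ht
  simpa [AP_eval] using this

/-- Newton basis functions. -/
noncomputable def NU (η θ : ℕ → ℂ) (x : ℕ × ℕ) : (ℂ × ℂ) → ℂ :=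
  fun zw => (∏ i ∈ range x.1, (zw.1 - η i)) * ∏ j ∈ range x.2, (zw.2 - θ j)

lemma pow23_lt {x1 x2 a b : ℕ} (h1 : x1 ≤ a) (h2 : x2 ≤ b) (hne : (x1, x2) ≠ (a, b)) :
    2 ^ x1 * 3 ^ x2 < 2 ^ a * 3 ^ b := by
  have : x1 < a ∨ x2 < b := by
    by_contra h; push_neg at h; exact hne (by simp [le_antisymm h1 h.1, le_antisymm h2 h.2])
  rcases this with h | h
  · calc 2 ^ x1 * 3 ^ x2 ≤ 2 ^ x1 * 3 ^ b :=
          Nat.mul_le_mul_left _ (Nat.pow_le_pow_right (by norm_num) h2)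
    _ < 2 ^ a * 3 ^ b := by
        have := Nat.pow_lt_pow_right (a := 2) (by norm_num) h
        have h3 : 0 < 3 ^ b := Nat.pow_pos (by norm_num)
        exact Nat.mul_lt_mul_of_lt_of_le this le_rfl h3
  · calc 2 ^ x1 * 3 ^ x2 ≤ 2 ^ a * 3 ^ x2 :=
          Nat.mul_le_mul_right _ (Nat.pow_le_pow_right (by norm_num) h1)
    _ < 2 ^ a * 3 ^ b := by
        have := Nat.pow_lt_pow_right (a := 3) (by norm_num) h
        have h2 : 0 < 2 ^ a := Nat.pow_pos (by norm_num)
        exact Nat.mul_lt_mul_of_le_of_lt le_rfl this h2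

/-- A product `P(z) Q(w)` with degrees dominated by an admissible index lies in the
span of the Newton basis functions. -/
lemma prod_mem_newton (η θ : ℕ → ℂ) (d m : ℕ) :
    ∀ n : ℕ, ∀ a b : ℕ, ∀ P Q : Polynomial ℂ, BidIdx d m (a, b) →
      P.natDegree ≤ a → Q.natDegree ≤ b → 2 ^ a * 3 ^ b ≤ n →
      (fun zw : ℂ × ℂ => P.eval zw.1 * Q.eval zw.2) ∈
        Submodule.span ℂ (NU η θ '' {x | BidIdx d m x}) := by
  intro n
  induction n using Nat.strong_induction_on with
  | _ n ih =>
    intro a b P Q hab hP hQ hn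
    set PZ : Polynomial ℂ := ∏ i ∈ range a, (Polynomial.X - Polynomial.C (η i)) with hPZ
    set PW : Polynomial ℂ := ∏ j ∈ range b, (Polynomial.X - Polynomial.C (θ j)) with hPW
    have hmz : PZ.Monic := monic_prod_of_monic _ _ fun i _ => monic_X_sub_C _
    have hmw : PW.Monic := monic_prod_of_monic _ _ fun j _ => monic_X_sub_C _
    have hdz : PZ.natDegree = a := by
      rw [hPZ, natDegree_prod_of_monic _ _ fun i _ => monic_X_sub_C _]
      simp [natDegree_X_sub_C]
    have hdw : PW.natDegree = b := by
      rw [hPW, natDegree_prod_of_monic _ _ fun j _ => monic_X_sub_C _]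
      simp [natDegree_X_sub_C]
    set c := P.coeff a with hc
    set e := Q.coeff b with he
    set P' := P - Polynomial.C c * PZ with hP'
    set Q' := Q - Polynomial.C e * PW with hQ'
    have hP'0 : a = 0 → P' = 0 := by
      intro ha
      have hPc : P = Polynomial.C c := by
        rw [hc, ha]; exact Polynomial.eq_C_of_natDegree_le_zero (ha ▸ hP)
      rw [hP', hPc, hPZ, ha]
      simp
    have hQ'0 : b = 0 → Q' = 0 := by
      intro hb
      have hQc : Q = Polynomial.C e := by
        rw [he, hb]; exact Polynomial.eq_C_of_natDegree_le_zero (hb ▸ hQ)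
      rw [hQ', hQc, hPW, hb]
      simp
    have hP'deg : P'.natDegree ≤ a - 1 := by
      rcases Nat.eq_zero_or_pos a with ha | ha
      · simp [hP'0 ha]
      · rw [Polynomial.natDegree_le_iff_coeff_eq_zero]
        intro N hN
        have hN' : a ≤ N := by omega
        rcases eq_or_lt_of_le hN' with h | h
        · rw [hP', Polynomial.coeff_sub, Polynomial.coeff_C_mul, ← h, ← hc,
            show PZ.coeff a = 1 from hdz ▸ hmz.coeff_natDegree]
          ring
        · rw [hP', Polynomial.coeff_sub, Polynomial.coeff_C_mul,
            Polynomial.coeff_eq_zero_of_natDegree_lt (lt_of_le_of_lt hP h),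
            Polynomial.coeff_eq_zero_of_natDegree_lt (lt_of_le_of_lt hdz.le h)]
          ring
    have hQ'deg : Q'.natDegree ≤ b - 1 := by
      rcases Nat.eq_zero_or_pos b with hb | hb
      · simp [hQ'0 hb]
      · rw [Polynomial.natDegree_le_iff_coeff_eq_zero]
        intro N hN
        have hN' : b ≤ N := by omega
        rcases eq_or_lt_of_le hN' with h | h
        · rw [hQ', Polynomial.coeff_sub, Polynomial.coeff_C_mul, ← h, ← he,
            show PW.coeff b = 1 from hdw ▸ hmw.coeff_natDegree]
          ring
        · rw [hQ', Polynomial.coeff_sub, Polynomial.coeff_C_mul,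
            Polynomial.coeff_eq_zero_of_natDegree_lt (lt_of_le_of_lt hQ h),
            Polynomial.coeff_eq_zero_of_natDegree_lt (lt_of_le_of_lt hdw.le h)]
          ring
    -- decomposition
    have decomp : (fun zw : ℂ × ℂ => P.eval zw.1 * Q.eval zw.2) =
        (c * e) • NU η θ (a, b)
        + (fun zw : ℂ × ℂ => (Polynomial.C c * PZ).eval zw.1 * Q'.eval zw.2)
        + (fun zw : ℂ × ℂ => P'.eval zw.1 * (Polynomial.C e * PW).eval zw.2)
        + (fun zw : ℂ × ℂ => P'.eval zw.1 * Q'.eval zw.2) := by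
      funext zw
      have hPz : P.eval zw.1 = c * PZ.eval zw.1 + P'.eval zw.1 := by
        rw [hP']; simp only [Polynomial.eval_sub, Polynomial.eval_mul, Polynomial.eval_C]; ring
      have hQw : Q.eval zw.2 = e * PW.eval zw.2 + Q'.eval zw.2 := by
        rw [hQ']; simp only [Polynomial.eval_sub, Polynomial.eval_mul, Polynomial.eval_C]; ring
      have hNU : NU η θ (a, b) zw = PZ.eval zw.1 * PW.eval zw.2 := by
        simp [NU, hPZ, hPW, Polynomial.eval_prod]
      simp only [Pi.add_apply, Pi.smul_apply, smul_eq_mul, hPz, hQw, hNU]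
      simp only [Polynomial.eval_mul, Polynomial.eval_C]
      ring
    rw [decomp]
    have mem1 : (c * e) • NU η θ (a, b) ∈
        Submodule.span ℂ (NU η θ '' {x | BidIdx d m x}) :=
      Submodule.smul_mem _ _ (Submodule.subset_span ⟨(a, b), hab, rfl⟩)
    have mem2 : (fun zw : ℂ × ℂ => (Polynomial.C c * PZ).eval zw.1 * Q'.eval zw.2) ∈
        Submodule.span ℂ (NU η θ '' {x | BidIdx d m x}) := by
      rcases Nat.eq_zero_or_pos b with hb | hb
      · have : (fun zw : ℂ × ℂ => (Polynomial.C c * PZ).eval zw.1 * Q'.eval zw.2)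
            = 0 := by funext zw; simp [hQ'0 hb]
        rw [this]; exact Submodule.zero_mem _
      · refine ih (2 ^ a * 3 ^ (b - 1)) ?_ a (b - 1) _ _
          (bidIdx_mono hab le_rfl (by omega)) ?_ hQ'deg le_rfl
        · calc 2 ^ a * 3 ^ (b - 1) < 2 ^ a * 3 ^ b :=
            pow23_lt le_rfl (by omega) (by simp; omega)
          _ ≤ n := hn
        · refine le_trans (Polynomial.natDegree_mul_le) ?_
          simp [hdz]
    have mem3 : (fun zw : ℂ × ℂ => P'.eval zw.1 * (Polynomial.C e * PW).eval zw.2) ∈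
        Submodule.span ℂ (NU η θ '' {x | BidIdx d m x}) := by
      rcases Nat.eq_zero_or_pos a with ha | ha
      · have : (fun zw : ℂ × ℂ => P'.eval zw.1 * (Polynomial.C e * PW).eval zw.2)
            = 0 := by funext zw; simp [hP'0 ha]
        rw [this]; exact Submodule.zero_mem _
      · refine ih (2 ^ (a - 1) * 3 ^ b) ?_ (a - 1) b _ _
          (bidIdx_mono hab (by omega) le_rfl) hP'deg ?_ le_rfl
        · calc 2 ^ (a - 1) * 3 ^ b < 2 ^ a * 3 ^ b :=
            pow23_lt (by omega) le_rfl (by simp; omega)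
          _ ≤ n := hn
        · refine le_trans (Polynomial.natDegree_mul_le) ?_
          simp [hdw]
    have mem4 : (fun zw : ℂ × ℂ => P'.eval zw.1 * Q'.eval zw.2) ∈
        Submodule.span ℂ (NU η θ '' {x | BidIdx d m x}) := by
      rcases Nat.eq_zero_or_pos a with ha | ha
      · have : (fun zw : ℂ × ℂ => P'.eval zw.1 * Q'.eval zw.2) = 0 := by
          funext zw; simp [hP'0 ha]
        rw [this]; exact Submodule.zero_mem _
      · rcases Nat.eq_zero_or_pos b with hb | hb
        · have : (fun zw : ℂ × ℂ => P'.eval zw.1 * Q'.eval zw.2) = 0 := by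
            funext zw; simp [hQ'0 hb]
          rw [this]; exact Submodule.zero_mem _
        · refine ih (2 ^ (a - 1) * 3 ^ (b - 1)) ?_ (a - 1) (b - 1) _ _
            (bidIdx_mono hab (by omega) (by omega)) hP'deg hQ'deg le_rfl
          calc 2 ^ (a - 1) * 3 ^ (b - 1) < 2 ^ a * 3 ^ b :=
            pow23_lt (by omega) (by omega) (by simp; omega)
          _ ≤ n := hn
    exact Submodule.add_mem _ (Submodule.add_mem _ (Submodule.add_mem _ mem1 mem2) mem3) mem4

lemma polySpace_le_newton (η θ : ℕ → ℂ) (d m : ℕ) :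
    PolySpace d m ≤ Submodule.span ℂ (NU η θ '' {x | BidIdx d m x}) := by
  rw [PolySpace, Submodule.span_le]
  rintro f ⟨k, l, hkl, rfl⟩
  have := prod_mem_newton η θ d m (2 ^ k * 3 ^ l) k l (Polynomial.X ^ k) (Polynomial.X ^ l)
    hkl (by simp [Polynomial.natDegree_X_pow]) (by simp [Polynomial.natDegree_X_pow]) le_rfl
  simpa using this

lemma newton_vanish (η θ : ℕ → ℂ) (hη : Function.Injective η) (hθ : Function.Injective θ)
    (d m : ℕ) (f : (ℂ × ℂ) → ℂ)
    (hf : f ∈ Submodule.span ℂ (NU η θ '' {x | BidIdx d m x}))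
    (hvan : ∀ k l : ℕ, BidIdx d m (k, l) → f (η k, θ l) = 0) : f = 0 := by
  rw [Finsupp.mem_span_image_iff_linearCombination] at hf
  obtain ⟨c, hcsupp, hcf⟩ := hf
  rw [Finsupp.mem_supported] at hcsupp
  have key : ∀ n : ℕ, ∀ x ∈ c.support, 2 ^ x.1 * 3 ^ x.2 ≤ n → c x = 0 := by
    intro n
    induction n using Nat.strong_induction_on with
    | _ n ih =>
      intro x hx hxn
      obtain ⟨a, b⟩ := x
      have hab : BidIdx d m (a, b) := hcsupp hx
      have hfab : f (η a, θ b) = 0 := hvan a b hab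
      rw [← hcf] at hfab
      rw [Finsupp.linearCombination_apply, Finsupp.sum] at hfab
      have happ : (∑ y ∈ c.support, c y • NU η θ y) (η a, θ b)
          = ∑ y ∈ c.support, c y * NU η θ y (η a, θ b) := by
        rw [Finset.sum_apply]; rfl
      rw [happ] at hfab
      have hsingle : ∑ y ∈ c.support, c y * NU η θ y (η a, θ b)
          = c (a, b) * NU η θ (a, b) (η a, θ b) := by
        refine Finset.sum_eq_single _ ?_ (fun h => absurd hx h)
        intro y hy hne
        by_cases hle : y.1 ≤ a ∧ y.2 ≤ b
        · have : c y = 0 := by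
            refine ih (2 ^ y.1 * 3 ^ y.2) ?_ y hy le_rfl
            calc 2 ^ y.1 * 3 ^ y.2 < 2 ^ a * 3 ^ b :=
              pow23_lt hle.1 hle.2 (by rwa [← Prod.mk.eta (p := y)] at hne)
            _ ≤ n := hxn
          rw [this, zero_mul]
        · have : NU η θ y (η a, θ b) = 0 := by
            rw [NU]
            rcases not_and_or.1 hle with h | h
            · refine mul_eq_zero_of_left (Finset.prod_eq_zero
                (Finset.mem_range.2 (by omega : a < y.1)) ?_) _
              simp
            · refine mul_eq_zero_of_right _ (Finset.prod_eq_zero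
                (Finset.mem_range.2 (by omega : b < y.2)) ?_)
              simp
          rw [this, mul_zero]
      rw [hsingle] at hfab
      have hnz : NU η θ (a, b) (η a, θ b) ≠ 0 := by
        rw [NU]
        refine mul_ne_zero ?_ ?_
        · refine Finset.prod_ne_zero_iff.2 fun i hi => ?_
          exact sub_ne_zero.2 fun h => (Finset.mem_range.1 hi).ne' (hη h)
        · refine Finset.prod_ne_zero_iff.2 fun j hj => ?_
          exact sub_ne_zero.2 fun h => (Finset.mem_range.1 hj).ne' (hθ h)
      exact (mul_eq_zero.1 hfab).resolve_right hnz
  have hc0 : c = 0 := by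
    ext x
    by_cases hx : x ∈ c.support
    · exact key (2 ^ x.1 * 3 ^ x.2) x hx le_rfl
    · exact Finsupp.notMem_support_iff.1 hx
  rw [← hcf, hc0]
  simp

/-- The right-hand side of Statement 13, as a function on `ℂ²`. -/
noncomputable def Rf (η θ : ℕ → ℂ) (d m p q : ℕ) : (ℂ × ℂ) → ℂ := fun zw =>
  AA η p p zw.1 * AA θ q (d - p + 1) zw.2
    - AA η p p zw.1 * AA θ q (d - p) zw.2
    + AA η p (p + 2) zw.1 * AA θ q (d - p) zw.2
    + (∑ r ∈ Finset.Icc 1 (m - p - 1),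
        (AA η p (p + r + 2) zw.1 * AA θ q (d - p - r) zw.2
          - AA η p (p + r + 1) zw.1 * AA θ q (d - p - r) zw.2))
    + (∑ r ∈ Finset.Icc (m - p) (d - p - q - 2),
        (AA η p (p + r + 2) zw.1 * AA θ q (d - p - r - 1) zw.2
          - AA η p (p + r + 1) zw.1 * AA θ q (d - p - r - 1) zw.2))

lemma Rf_eval (η θ : ℕ → ℂ) (hη : Function.Injective η) (hθ : Function.Injective θ)
    (d m p q : ℕ) (hpq : p + q + 2 ≤ d) (hp : p < m) (hq : q + m + 1 ≤ d)
    (k l : ℕ) (hkl : BidIdx d m (k, l)) :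
    Rf η θ d m p q (η k, θ l) = if (k, l) = (p, q) then 1 else 0 := by
  have hkld : k + l ≤ d := by rcases hkl with h | ⟨h1, _⟩ <;> omega
  by_cases hkp : k = p
  · subst hkp
    simp only [Rf, AA_self η hη, one_mul]
    by_cases hlq : l = q
    · subst hlq
      simp [AA_self θ hθ]
    · rw [if_neg (by simp [hlq])]
      rw [AA_zero θ q (d - k + 1) l hlq (by omega)]
      simp
  · by_cases hkp' : k < p
    · have z1 : AA η p p (η k) = 0 := AA_zero η p p k hkp (by omega)
      have z2 : AA η p (p + 2) (η k) = 0 := AA_zero η p (p + 2) k hkp (by omega)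
      rw [if_neg (by simp [hkp])]
      simp only [Rf, z1, z2]
      rw [Finset.sum_eq_zero, Finset.sum_eq_zero]
      · ring
      · intro r _
        rw [AA_zero η p (p + r + 2) k hkp (by omega),
          AA_zero η p (p + r + 1) k hkp (by omega)]
        ring
      · intro r _
        rw [AA_zero η p (p + r + 2) k hkp (by omega),
          AA_zero η p (p + r + 1) k hkp (by omega)]
        ring
    · have hpk : p < k := by omega
      rw [if_neg (by simp [hkp])]
      by_cases hlq : l = q
      · subst hlq
        have hkd : k + l < d := by
          rcases hkl with h | ⟨h1, h2⟩
          · exact h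
          · exfalso; omega
        simp only [Rf, AA_self θ hθ, mul_one]
        have s1 : ∑ r ∈ Finset.Icc 1 (m - p - 1),
            (AA η p (p + r + 2) (η k) - AA η p (p + r + 1) (η k))
            = AA η p (p + (m - p) + 1) (η k) - AA η p (p + 1 + 1) (η k) := by
          rw [show Finset.Icc 1 (m - p - 1) = Finset.Ico 1 (m - p) from by
            rw [← Finset.Ico_add_one_right_eq_Icc]; congr 1; omega]
          exact tele (fun r => AA η p (p + r + 1) (η k)) 1 (m - p) (by omega)
        have s2 : ∑ r ∈ Finset.Icc (m - p) (d - p - l - 2),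
            (AA η p (p + r + 2) (η k) - AA η p (p + r + 1) (η k))
            = AA η p (p + (d - p - l - 1) + 1) (η k) - AA η p (p + (m - p) + 1) (η k) := by
          rw [show Finset.Icc (m - p) (d - p - l - 2) = Finset.Ico (m - p) (d - p - l - 1) from by
            rw [← Finset.Ico_add_one_right_eq_Icc]; congr 1; omega]
          exact tele (fun r => AA η p (p + r + 1) (η k)) (m - p) (d - p - l - 1) (by omega)
        rw [s1, s2, AA_zero η p (p + (d - p - l - 1) + 1) k hkp (by omega)]
        ring
      · -- k > p, l ≠ q : every term vanishes
        have hldp : l < d - p := by omega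
        simp only [Rf]
        rw [AA_zero θ q (d - p + 1) l hlq (by omega), AA_zero θ q (d - p) l hlq (by omega)]
        rw [Finset.sum_eq_zero, Finset.sum_eq_zero]
        · ring
        · intro r hr
          rw [Finset.mem_Icc] at hr
          by_cases hB : l < d - p - r - 1
          · rw [AA_zero θ q (d - p - r - 1) l hlq hB]; ring
          · have hkr : k < p + r + 1 := by
              by_contra hcon
              push_neg at hcon
              have h4 : k ≤ m := by
                rcases hkl with h | ⟨_, h5⟩
                · omega
                · exact h5
              omega
            rw [AA_zero η p (p + r + 2) k hkp (by omega),
              AA_zero η p (p + r + 1) k hkp hkr]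
            ring
        · intro r hr
          rw [Finset.mem_Icc] at hr
          by_cases hB : l < d - p - r
          · rw [AA_zero θ q (d - p - r) l hlq hB]; ring
          · have hkr : k < p + r + 1 := by omega
            rw [AA_zero η p (p + r + 2) k hkp (by omega),
              AA_zero η p (p + r + 1) k hkp hkr]
            ring

lemma Rf_mem (η θ : ℕ → ℂ) (d m p q : ℕ)
    (hpq : p + q + 2 ≤ d) (hp : p < m) (hq : q + m + 1 ≤ d) :
    Rf η θ d m p q ∈ PolySpace d m := by
  have hRf : Rf η θ d m p q =
      (fun zw : ℂ × ℂ => AA η p p zw.1 * AA θ q (d - p + 1) zw.2)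
      - (fun zw : ℂ × ℂ => AA η p p zw.1 * AA θ q (d - p) zw.2)
      + (fun zw : ℂ × ℂ => AA η p (p + 2) zw.1 * AA θ q (d - p) zw.2)
      + (∑ r ∈ Finset.Icc 1 (m - p - 1),
          ((fun zw : ℂ × ℂ => AA η p (p + r + 2) zw.1 * AA θ q (d - p - r) zw.2)
            - (fun zw : ℂ × ℂ => AA η p (p + r + 1) zw.1 * AA θ q (d - p - r) zw.2)))
      + (∑ r ∈ Finset.Icc (m - p) (d - p - q - 2),
          ((fun zw : ℂ × ℂ => AA η p (p + r + 2) zw.1 * AA θ q (d - p - r - 1) zw.2)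
            - (fun zw : ℂ × ℂ => AA η p (p + r + 1) zw.1 * AA θ q (d - p - r - 1) zw.2))) := by
    funext zw
    simp only [Rf, Pi.add_apply, Pi.sub_apply, Finset.sum_apply]
  rw [hRf]
  refine Submodule.add_mem _ (Submodule.add_mem _ (Submodule.add_mem _
    (Submodule.sub_mem _ ?_ ?_) ?_) ?_) ?_
  · exact AA_prod_mem_polySpace η θ d m p (d - p) p q p (d - p + 1)
      (Or.inr ⟨by omega, by omega⟩) (AP_natDegree_le_of_le le_rfl)
      (by have := AP_natDegree_le_of_lt (η := θ) (p := q) (s := d - p + 1) (by omega); omega)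
  · exact AA_prod_mem_polySpace η θ d m p (d - p - 1) p q p (d - p)
      (Or.inl (by omega)) (AP_natDegree_le_of_le le_rfl)
      (by have := AP_natDegree_le_of_lt (η := θ) (p := q) (s := d - p) (by omega); omega)
  · exact AA_prod_mem_polySpace η θ d m (p + 1) (d - p - 1) p q (p + 2) (d - p)
      (Or.inr ⟨by omega, by omega⟩)
      (by have := AP_natDegree_le_of_lt (η := η) (p := p) (s := p + 2) (by omega); omega)
      (by have := AP_natDegree_le_of_lt (η := θ) (p := q) (s := d - p) (by omega); omega)
  · refine Submodule.sum_mem _ fun r hr => ?_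
    rw [Finset.mem_Icc] at hr
    refine Submodule.sub_mem _ ?_ ?_
    · exact AA_prod_mem_polySpace η θ d m (p + r + 1) (d - p - r - 1) p q (p + r + 2) (d - p - r)
        (Or.inr ⟨by omega, by omega⟩)
        (by have := AP_natDegree_le_of_lt (η := η) (p := p) (s := p + r + 2) (by omega); omega)
        (by have := AP_natDegree_le_of_lt (η := θ) (p := q) (s := d - p - r) (by omega); omega)
    · exact AA_prod_mem_polySpace η θ d m (p + r) (d - p - r - 1) p q (p + r + 1) (d - p - r)
        (Or.inl (by omega))
        (by have := AP_natDegree_le_of_lt (η := η) (p := p) (s := p + r + 1) (by omega); omega)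
        (by have := AP_natDegree_le_of_lt (η := θ) (p := q) (s := d - p - r) (by omega); omega)
  · refine Submodule.sum_mem _ fun r hr => ?_
    rw [Finset.mem_Icc] at hr
    refine Submodule.sub_mem _ ?_ ?_
    · exact AA_prod_mem_polySpace η θ d m (p + r + 1) (d - p - r - 2) p q (p + r + 2) (d - p - r - 1)
        (Or.inl (by omega))
        (by have := AP_natDegree_le_of_lt (η := η) (p := p) (s := p + r + 2) (by omega); omega)
        (by have := AP_natDegree_le_of_lt (η := θ) (p := q) (s := d - p - r - 1) (by omega); omega)
    · exact AA_prod_mem_polySpace η θ d m (p + r) (d - p - r - 2) p q (p + r + 1) (d - p - r - 1)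
        (Or.inl (by omega))
        (by have := AP_natDegree_le_of_lt (η := η) (p := p) (s := p + r + 1) (by omega); omega)
        (by have := AP_natDegree_le_of_lt (η := θ) (p := q) (s := d - p - r - 1) (by omega); omega)

/-- in the bidimensional intertwining setting, for a point
`(η_p, θ_q) ∈ Ω_N` with `p+q ≤ d−2`, `0 ≤ p ≤ m−1` and `0 ≤ q ≤ d−m−1`,
the FLIP is given by the explicit formula with two correcting sums. -/
theorem statement13 (η θ : ℕ → ℂ)
    (hη : Function.Injective η) (hθ : Function.Injective θ)
    (N d m : ℕ) (hN : 1 ≤ N)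
    (hlow : d * (d + 1) / 2 < N) (hhigh : N ≤ (d + 1) * (d + 2) / 2)
    (hm : N = d * (d + 1) / 2 + 1 + m)
    (p q : ℕ) (hpq : p + q + 2 ≤ d) (hp : p < m) (hq : q + m + 1 ≤ d) :
    ∀ L : (ℂ × ℂ) → ℂ, IsFLIP η θ d m p q L →
      ∀ z w : ℂ,
        L (z, w) =
          (∏ i ∈ range p, (z - η i) / (η p - η i)) *
              (∏ j ∈ (range (d - p + 1)).erase q, (w - θ j) / (θ q - θ j))
            - (∏ i ∈ range p, (z - η i) / (η p - η i)) *
                (∏ j ∈ (range (d - p)).erase q, (w - θ j) / (θ q - θ j))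
            + (∏ i ∈ (range (p + 2)).erase p, (z - η i) / (η p - η i)) *
                (∏ j ∈ (range (d - p)).erase q, (w - θ j) / (θ q - θ j))
            + (∑ r ∈ Finset.Icc 1 (m - p - 1),
                ((∏ i ∈ (range (p + r + 2)).erase p, (z - η i) / (η p - η i)) *
                    (∏ j ∈ (range (d - p - r)).erase q, (w - θ j) / (θ q - θ j))
                  - (∏ i ∈ (range (p + r + 1)).erase p, (z - η i) / (η p - η i)) *
                      (∏ j ∈ (range (d - p - r)).erase q, (w - θ j) / (θ q - θ j))))
            + (∑ r ∈ Finset.Icc (m - p) (d - p - q - 2),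
                ((∏ i ∈ (range (p + r + 2)).erase p, (z - η i) / (η p - η i)) *
                    (∏ j ∈ (range (d - p - r - 1)).erase q, (w - θ j) / (θ q - θ j))
                  - (∏ i ∈ (range (p + r + 1)).erase p, (z - η i) / (η p - η i)) *
                      (∏ j ∈ (range (d - p - r - 1)).erase q,
                        (w - θ j) / (θ q - θ j)))) := by
  intro L hL z w
  have hmem : Rf η θ d m p q ∈ PolySpace d m := Rf_mem η θ d m p q hpq hp hq
  have hdiff : L - Rf η θ d m p q ∈ PolySpace d m := Submodule.sub_mem _ hL.1 hmem
  have hvan : ∀ k l : ℕ, BidIdx d m (k, l) → (L - Rf η θ d m p q) (η k, θ l) = 0 := by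
    intro k l hkl
    simp only [Pi.sub_apply]
    rw [Rf_eval η θ hη hθ d m p q hpq hp hq k l hkl]
    by_cases h : (k, l) = (p, q)
    · rw [if_pos h]
      obtain ⟨hk, hl⟩ := Prod.ext_iff.mp h
      simp only at hk hl
      rw [hk, hl, hL.2.1, sub_self]
    · rw [if_neg h, hL.2.2 k l hkl h, sub_zero]
  have hzero : L - Rf η θ d m p q = 0 :=
    newton_vanish η θ hη hθ d m _ (polySpace_le_newton η θ d m hdiff) hvan
  have hLR : L = Rf η θ d m p q := by
    funext zw
    have := congrFun hzero zw
    simpa [Pi.sub_apply, sub_eq_zero] using this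
  rw [hLR]
  show Rf η θ d m p q (z, w) = _
  rw [Rf]
  simp only [AA]
  rw [Finset.erase_eq_of_notMem Finset.notMem_range_self]
end

section
/- Let (η_i)_{i≥0} and (θ_j)_{j≥0} be sequences of pairwise distinct complex numbers, N ≥ 1 with associated integers d, m, and Ω_N, 𝒫_N as in the bidimensional intertwining setting. If (η_p,θ_q) ∈ Ω_N with 0 ≤ p+q ≤ d−2, 0 ≤ p ≤ m−1 and q ≥ d−m, then for all (z,w) ∈ ℂ²: l^{(N)}_{(η_p,θ_q)}(z,w) = ∏_{i=0}^{p−1} (z−η_i)/(η_p−η_i) ∏_{j=0,j≠q}^{d−p} (w−θ_j)/(θ_q−θ_j) − ∏_{i=0}^{p−1} (z−η_i)/(η_p−η_i) ∏_{j=0,j≠q}^{d−p−1} (w−θ_j)/(θ_q−θ_j) + ∏_{i=0,i≠p}^{p+1} (z−η_i)/(η_p−η_i) ∏_{j=0,j≠q}^{d−p−1} (w−θ_j)/(θ_q−θ_j) + Σ_{r=1}^{d−p−q−1} [∏_{i=0,i≠p}^{p+r+1} (z−η_i)/(η_p−η_i) ∏_{j=0,j≠q}^{d−p−r−1} (w−θ_j)/(θ_q−θ_j)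 − ∏_{i=0,i≠p}^{p+r} (z−η_i)/(η_p−η_i) ∏_{j=0,j≠q}^{d−p−r−1} (w−θ_j)/(θ_q−θ_j)]. -/
open Finset

open Polynomial

lemma dd_aux (x : ℕ → ℂ) (hx : Function.Injective x) (k : ℕ) (a : ℕ) (ha : a ≤ k) :
    ∑ i ∈ range (k+1), x i ^ a * (∏ j ∈ (range (k+1)).erase i, (x i - x j))⁻¹
      = if a = k then 1 else 0 := by
  set c : ℕ → ℂ := fun i => x i ^ a * (∏ j ∈ (range (k+1)).erase i, (x i - x j))⁻¹ with hc
  set P : Polynomial ℂ :=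
    (∑ i ∈ range (k+1), C (c i) * ∏ j ∈ (range (k+1)).erase i, (X - C (x j))) - X ^ a with hP
  have hprodne : ∀ i ∈ range (k+1), (∏ j ∈ (range (k+1)).erase i, (x i - x j)) ≠ 0 := by
    intro i _
    refine Finset.prod_ne_zero_iff.2 fun j hj => ?_
    have : j ≠ i := (Finset.mem_erase.1 hj).1
    exact sub_ne_zero.2 fun h => this (hx h.symm)
  have heval : ∀ i0 ∈ range (k+1), P.eval (x i0) = 0 := by
    intro i0 hi0
    have : (∑ i ∈ range (k+1), C (c i) * ∏ j ∈ (range (k+1)).erase i, (X - C (x j))).eval (x i0)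
        = x i0 ^ a := by
      rw [eval_finset_sum]
      rw [Finset.sum_eq_single i0]
      · simp only [eval_mul, eval_C, eval_prod, eval_sub, eval_X]
        rw [hc]
        rw [mul_assoc, inv_mul_cancel₀ (hprodne i0 hi0), mul_one]
      · intro i hi hne
        simp only [eval_mul, eval_C, eval_prod, eval_sub, eval_X]
        have : x i0 - x i0 = 0 := sub_self _
        rw [Finset.prod_eq_zero (Finset.mem_erase.2 ⟨fun h => hne h.symm, hi0⟩) (by simp), mul_zero]
      · intro h; exact absurd hi0 h
    simp [hP, this]
  have hdeg : P.natDegree < k + 1 := by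
    have h1 : (∑ i ∈ range (k+1), C (c i) * ∏ j ∈ (range (k+1)).erase i, (X - C (x j))).natDegree ≤ k := by
      refine Polynomial.natDegree_sum_le_of_forall_le _ _ fun i hi => ?_
      refine le_trans (natDegree_mul_le) ?_
      simp only [natDegree_C, zero_add]
      refine le_trans (Polynomial.natDegree_prod_le _ _) ?_
      have : ∀ j ∈ (range (k+1)).erase i, (X - C (x j)).natDegree = 1 := fun j _ => natDegree_X_sub_C _
      rw [Finset.sum_congr rfl this, Finset.sum_const, smul_eq_mul, mul_one]
      simp [Finset.card_erase_of_mem hi]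
    have h2 : (X ^ a : Polynomial ℂ).natDegree ≤ k := by simpa using ha
    exact lt_of_le_of_lt (le_trans (natDegree_sub_le _ _) (max_le h1 h2)) (Nat.lt_succ_self k)
  have hP0 : P = 0 := by
    refine Polynomial.eq_zero_of_natDegree_lt_card_of_eval_eq_zero' P ((range (k+1)).image x) ?_ ?_
    · intro y hy
      obtain ⟨i, hi, rfl⟩ := Finset.mem_image.1 hy
      exact heval i hi
    · rwa [Finset.card_image_of_injective _ hx, Finset.card_range]
  have hcoeff := congrArg (fun Q => Polynomial.coeff Q k) hP0
  simp only [hP, Polynomial.coeff_sub, Polynomial.coeff_zero, Polynomial.finset_sum_coeff] at hcoeff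
  have hmon : ∀ i ∈ range (k+1),
      (C (c i) * ∏ j ∈ (range (k+1)).erase i, (X - C (x j))).coeff k = c i := by
    intro i hi
    have hmonic : (∏ j ∈ (range (k+1)).erase i, (X - C (x j))).Monic :=
      monic_prod_of_monic _ _ fun j _ => monic_X_sub_C _
    have hnd : (∏ j ∈ (range (k+1)).erase i, (X - C (x j))).natDegree = k := by
      rw [Polynomial.natDegree_prod _ _ fun j _ => X_sub_C_ne_zero _]
      simp [Finset.card_erase_of_mem hi]
    rw [Polynomial.coeff_C_mul]
    have h1 := hmonic.coeff_natDegree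
    rw [hnd] at h1
    rw [h1, mul_one]
  rw [Finset.sum_congr rfl hmon, Polynomial.coeff_X_pow] at hcoeff
  have := sub_eq_zero.1 hcoeff
  rw [hc] at this
  rw [this]
  by_cases h : a = k
  · simp [h]
  · rw [if_neg h, if_neg (fun hh : k = a => h hh.symm)]


lemma lower_unisolvent (η θ : ℕ → ℂ) (hη : Function.Injective η) (hθ : Function.Injective θ)
    (S : Finset (ℕ × ℕ))
    (hlow : ∀ a b a' b', (a,b) ∈ S → a' ≤ a → b' ≤ b → (a',b') ∈ S)
    (c : ℕ × ℕ → ℂ) (hsupp : ∀ ab, ab ∉ S → c ab = 0)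
    (hvan : ∀ kl ∈ S, ∑ ab ∈ S, c ab * η kl.1 ^ ab.1 * θ kl.2 ^ ab.2 = 0) :
    ∀ ab, c ab = 0 := by
  induction S using Finset.strongInduction generalizing c with
  | _ S IH =>
    rcases S.eq_empty_or_nonempty with rfl | hne
    · exact fun ab => hsupp ab (by simp)
    intro ab
    have hne1 : (S.image Prod.fst).Nonempty := hne.image _
    set kk := (S.image Prod.fst).max' hne1 with hkk
    have hne2 : ((S.filter (fun ab => ab.1 = kk)).image Prod.snd).Nonempty := by
      obtain ⟨x, hx, hx2⟩ := Finset.mem_image.1 ((S.image Prod.fst).max'_mem hne1)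
      exact ⟨x.2, Finset.mem_image.2 ⟨x, Finset.mem_filter.2 ⟨hx, hx2⟩, rfl⟩⟩
    set ll := ((S.filter (fun ab => ab.1 = kk)).image Prod.snd).max' hne2 with hll
    have hmem : (kk, ll) ∈ S := by
      obtain ⟨x, hx, hx2⟩ := Finset.mem_image.1
        (Finset.max'_mem _ hne2)
      obtain ⟨hxS, hx1⟩ := Finset.mem_filter.1 hx
      have : x = (kk, ll) := Prod.ext hx1 hx2
      rwa [this] at hxS
    have hb1 : ∀ x ∈ S, x.1 ≤ kk := fun x hx =>
      Finset.le_max' _ _ (Finset.mem_image.2 ⟨x, hx, rfl⟩)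
    have hb2 : ∀ x ∈ S, x.1 = kk → x.2 ≤ ll := fun x hx h1 =>
      Finset.le_max' _ _ (Finset.mem_image.2 ⟨x, Finset.mem_filter.2 ⟨hx, h1⟩, rfl⟩)
    set u : ℕ → ℂ := fun i => (∏ j ∈ (range (kk+1)).erase i, (η i - η j))⁻¹ with hu
    set v : ℕ → ℂ := fun j => (∏ j' ∈ (range (ll+1)).erase j, (θ j - θ j'))⁻¹ with hv
    have main :
        (∑ x ∈ S, c x * ((∑ i ∈ range (kk+1), η i ^ x.1 * u i) *
            (∑ j ∈ range (ll+1), θ j ^ x.2 * v j))) = 0 := by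
      have e1 : ∀ x : ℕ × ℕ, c x * ((∑ i ∈ range (kk+1), η i ^ x.1 * u i) *
            (∑ j ∈ range (ll+1), θ j ^ x.2 * v j))
          = ∑ i ∈ range (kk+1), ∑ j ∈ range (ll+1),
              c x * η i ^ x.1 * θ j ^ x.2 * (u i * v j) := by
        intro x
        rw [Finset.sum_mul_sum, Finset.mul_sum]
        exact Finset.sum_congr rfl fun i _ => by
          rw [Finset.mul_sum]
          exact Finset.sum_congr rfl fun j _ => by ring
      rw [Finset.sum_congr rfl fun x _ => e1 x, Finset.sum_comm]
      have e2 : ∀ i ∈ range (kk+1),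
          (∑ x ∈ S, ∑ j ∈ range (ll+1), c x * η i ^ x.1 * θ j ^ x.2 * (u i * v j)) = 0 := by
        intro i hi
        rw [Finset.sum_comm]
        refine Finset.sum_eq_zero fun j hj => ?_
        have hgrid : (i, j) ∈ S :=
          hlow kk ll i j hmem (Nat.lt_succ_iff.1 (Finset.mem_range.1 hi))
            (Nat.lt_succ_iff.1 (Finset.mem_range.1 hj))
        have := hvan (i, j) hgrid
        calc (∑ x ∈ S, c x * η i ^ x.1 * θ j ^ x.2 * (u i * v j))
            = (∑ x ∈ S, c x * η i ^ x.1 * θ j ^ x.2) * (u i * v j) := by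
              rw [Finset.sum_mul]
          _ = 0 := by rw [this, zero_mul]
      exact Finset.sum_eq_zero e2
    have hDD1 : ∀ a ≤ kk, (∑ i ∈ range (kk+1), η i ^ a * u i) = if a = kk then 1 else 0 :=
      fun a ha => dd_aux η hη kk a ha
    have hDD2 : ∀ b ≤ ll, (∑ j ∈ range (ll+1), θ j ^ b * v j) = if b = ll then 1 else 0 :=
      fun b hb => dd_aux θ hθ ll b hb
    rw [Finset.sum_eq_single (kk, ll)] at main
    · rw [hDD1 kk le_rfl, hDD2 ll le_rfl, if_pos rfl, if_pos rfl, one_mul, mul_one] at main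
      -- main : c (kk,ll) = 0
      by_cases hab : ab = (kk, ll)
      · rwa [hab]
      · -- apply IH to S.erase (kk,ll)
        have hlow' : ∀ a b a' b', (a,b) ∈ S.erase (kk,ll) → a' ≤ a → b' ≤ b →
            (a',b') ∈ S.erase (kk,ll) := by
          intro a b a' b' hmem' ha' hb'
          obtain ⟨hne', hS'⟩ := Finset.mem_erase.1 hmem'
          refine Finset.mem_erase.2 ⟨?_, hlow a b a' b' hS' ha' hb'⟩
          intro h
          rw [Prod.mk.injEq] at h
          obtain ⟨h1, h2⟩ := h
          have ha : a = kk := le_antisymm (hb1 (a,b) hS') (h1 ▸ ha')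
          have hbb : b = ll := le_antisymm (hb2 (a,b) hS' ha) (h2 ▸ hb')
          exact hne' (Prod.ext ha hbb)
        set c' : ℕ × ℕ → ℂ := fun x => if x = (kk,ll) then 0 else c x with hc'
        have hsupp' : ∀ x, x ∉ S.erase (kk,ll) → c' x = 0 := by
          intro x hx
          by_cases h : x = (kk,ll)
          · simp [hc', h]
          · have : x ∉ S := fun hxS => hx (Finset.mem_erase.2 ⟨h, hxS⟩)
            simp [hc', h, hsupp x this]
        have hvan' : ∀ kl ∈ S.erase (kk,ll),
            ∑ x ∈ S.erase (kk,ll), c' x * η kl.1 ^ x.1 * θ kl.2 ^ x.2 = 0 := by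
          intro kl hkl
          have e : ∀ x ∈ S.erase (kk,ll),
              c' x * η kl.1 ^ x.1 * θ kl.2 ^ x.2 = c x * η kl.1 ^ x.1 * θ kl.2 ^ x.2 := by
            intro x hx
            rw [hc']
            simp [(Finset.mem_erase.1 hx).1]
          rw [Finset.sum_congr rfl e]
          rw [Finset.sum_erase _ (by rw [main, zero_mul, zero_mul])]
          exact hvan kl (Finset.mem_of_mem_erase hkl)
        have := IH (S.erase (kk,ll)) (Finset.erase_ssubset hmem) hlow' c' hsupp' hvan' ab
        rw [show c' ab = c ab by rw [hc']; exact if_neg hab] at this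
        exact this
    · intro x hx hne'
      by_cases h1 : x.1 = kk
      · have h2 := hb2 x hx h1
        have h2' : x.2 ≠ ll := fun h => hne' (Prod.ext h1 h)
        rw [hDD2 x.2 h2, if_neg h2', mul_zero, mul_zero]
      · rw [hDD1 x.1 (hb1 x hx), if_neg h1, zero_mul, mul_zero]
    · intro h; exact absurd hmem h

open scoped Classical in
lemma polySpace_vanish (η θ : ℕ → ℂ) (hη : Function.Injective η) (hθ : Function.Injective θ)
    (d m : ℕ) (f : (ℂ × ℂ) → ℂ) (hf : f ∈ PolySpace d m)
    (hvan : ∀ k l : ℕ, BidIdx d m (k, l) → f (η k, θ l) = 0) :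
    ∀ zw : ℂ × ℂ, f zw = 0 := by
  classical
  obtain ⟨n, coef, g, hrep⟩ := Submodule.mem_span_set'.1 hf
  set Sfin : Finset (ℕ × ℕ) :=
    (range (d+1) ×ˢ range (d+1)).filter (fun ab => BidIdx d m ab) with hSfin
  have hSmem : ∀ ab : ℕ × ℕ, ab ∈ Sfin ↔ BidIdx d m ab := by
    intro ab
    constructor
    · exact fun h => (Finset.mem_filter.1 h).2
    · intro h
      refine Finset.mem_filter.2 ⟨Finset.mem_product.2 ⟨?_, ?_⟩, h⟩ <;>
      · rw [Finset.mem_range, Nat.lt_succ_iff]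
        rcases h with h | h
        · omega
        · omega
  -- choose exponents for each generator
  have hchoice : ∀ i : Fin n, ∃ ab : ℕ × ℕ, BidIdx d m ab ∧
      (g i : (ℂ × ℂ) → ℂ) = fun p : ℂ × ℂ => p.1 ^ ab.1 * p.2 ^ ab.2 := by
    intro i
    obtain ⟨k, l, hb, hfun⟩ := (g i).2
    exact ⟨(k, l), hb, hfun⟩
  choose φ hφ1 hφ2 using hchoice
  set c : ℕ × ℕ → ℂ := fun ab => ∑ i ∈ Finset.univ.filter (fun i => φ i = ab), coef i with hc
  have hrepr : ∀ zw : ℂ × ℂ, f zw = ∑ ab ∈ Sfin, c ab * zw.1 ^ ab.1 * zw.2 ^ ab.2 := by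
    intro zw
    have h1 : f zw = ∑ i : Fin n, coef i * (zw.1 ^ (φ i).1 * zw.2 ^ (φ i).2) := by
      rw [← hrep]
      rw [Finset.sum_apply]
      refine Finset.sum_congr rfl fun i _ => ?_
      rw [Pi.smul_apply, smul_eq_mul, hφ2 i]
    rw [h1]
    rw [← Finset.sum_fiberwise_of_maps_to (g := φ) (fun i _ => (hSmem (φ i)).2 (hφ1 i))]
    refine Finset.sum_congr rfl fun ab _ => ?_
    rw [hc, Finset.sum_mul, Finset.sum_mul]
    refine Finset.sum_congr rfl fun i hi => ?_
    rw [(Finset.mem_filter.1 hi).2]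
    ring
  have hsupp : ∀ ab, ab ∉ Sfin → c ab = 0 := by
    intro ab hab
    rw [hc]
    refine Finset.sum_eq_zero fun i hi => ?_
    exact absurd (((Finset.mem_filter.1 hi).2) ▸ (hSmem (φ i)).2 (hφ1 i)) hab
  have hlowS : ∀ a b a' b', (a,b) ∈ Sfin → a' ≤ a → b' ≤ b → (a',b') ∈ Sfin := by
    intro a b a' b' hmem ha' hb'
    have h := (hSmem (a,b)).1 hmem
    refine (hSmem (a',b')).2 ?_
    rcases h with h | ⟨h, hk⟩
    · left; simp only at h ⊢; omega
    · simp only at h hk ⊢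
      by_cases he : a' + b' = d
      · right
        exact ⟨he, by omega⟩
      · left; omega
  have hzero := lower_unisolvent η θ hη hθ Sfin hlowS c hsupp ?_
  · intro zw
    rw [hrepr zw]
    exact Finset.sum_eq_zero fun ab _ => by rw [hzero ab, zero_mul, zero_mul]
  · intro kl hkl
    rw [← hrepr (η kl.1, θ kl.2)]
    exact hvan kl.1 kl.2 ((hSmem kl).1 hkl)

lemma prod_mem_polySpace_s14 (d m : ℕ) (g h : Polynomial ℂ) (A B : ℕ)
    (hg : g.natDegree ≤ A) (hh : h.natDegree ≤ B)
    (hAB : ∀ k l : ℕ, k ≤ A → l ≤ B → BidIdx d m (k, l)) :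
    (fun zw : ℂ × ℂ => g.eval zw.1 * h.eval zw.2) ∈ PolySpace d m := by
  have hfun : (fun zw : ℂ × ℂ => g.eval zw.1 * h.eval zw.2)
      = ∑ k ∈ range (A+1), ∑ l ∈ range (B+1),
          (g.coeff k * h.coeff l) • (fun zw : ℂ × ℂ => zw.1 ^ k * zw.2 ^ l) := by
    funext zw
    rw [Finset.sum_apply]
    simp only [Finset.sum_apply, Pi.smul_apply, smul_eq_mul]
    rw [Polynomial.eval_eq_sum_range' (Nat.lt_succ_of_le hg),
        Polynomial.eval_eq_sum_range' (Nat.lt_succ_of_le hh), Finset.sum_mul_sum]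
    exact Finset.sum_congr rfl fun k _ => Finset.sum_congr rfl fun l _ => by ring
  rw [hfun]
  refine Submodule.sum_mem _ fun k hk => Submodule.sum_mem _ fun l hl => ?_
  refine Submodule.smul_mem _ _ (Submodule.subset_span ?_)
  exact ⟨k, l, hAB k l (Nat.lt_succ_iff.1 (Finset.mem_range.1 hk))
    (Nat.lt_succ_iff.1 (Finset.mem_range.1 hl)), rfl⟩

lemma term_mem_polySpace (d m : ℕ) (η θ : ℕ → ℂ) (p q : ℕ) (s t : Finset ℕ) (A B : ℕ)
    (hA : s.card ≤ A) (hB : t.card ≤ B)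
    (hAB : ∀ k l : ℕ, k ≤ A → l ≤ B → BidIdx d m (k, l)) :
    (fun zw : ℂ × ℂ => (∏ i ∈ s, (zw.1 - η i) / (η p - η i)) *
      (∏ j ∈ t, (zw.2 - θ j) / (θ q - θ j))) ∈ PolySpace d m := by
  set G : Polynomial ℂ := ∏ i ∈ s, ((X - C (η i)) * C ((η p - η i)⁻¹)) with hG
  set H : Polynomial ℂ := ∏ j ∈ t, ((X - C (θ j)) * C ((θ q - θ j)⁻¹)) with hH
  have hGev : ∀ z : ℂ, G.eval z = ∏ i ∈ s, (z - η i) / (η p - η i) := by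
    intro z
    rw [hG, Polynomial.eval_prod]
    exact Finset.prod_congr rfl fun i _ => by
      simp [div_eq_mul_inv]
  have hHev : ∀ w : ℂ, H.eval w = ∏ j ∈ t, (w - θ j) / (θ q - θ j) := by
    intro w
    rw [hH, Polynomial.eval_prod]
    exact Finset.prod_congr rfl fun j _ => by
      simp [div_eq_mul_inv]
  have hGdeg : G.natDegree ≤ A := by
    refine le_trans (Polynomial.natDegree_prod_le _ _) (le_trans ?_ hA)
    refine le_trans (Finset.sum_le_card_nsmul s _ 1 fun i _ => ?_) (by simp)
    refine le_trans natDegree_mul_le ?_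
    simp [natDegree_X_sub_C]
  have hHdeg : H.natDegree ≤ B := by
    refine le_trans (Polynomial.natDegree_prod_le _ _) (le_trans ?_ hB)
    refine le_trans (Finset.sum_le_card_nsmul t _ 1 fun i _ => ?_) (by simp)
    refine le_trans natDegree_mul_le ?_
    simp [natDegree_X_sub_C]
  have := prod_mem_polySpace_s14 d m G H A B hGdeg hHdeg hAB
  have heq : (fun zw : ℂ × ℂ => G.eval zw.1 * H.eval zw.2)
      = (fun zw : ℂ × ℂ => (∏ i ∈ s, (zw.1 - η i) / (η p - η i)) *
          (∏ j ∈ t, (zw.2 - θ j) / (θ q - θ j))) := by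
    funext zw; rw [hGev, hHev]
  rwa [heq] at this

lemma hone (x : ℕ → ℂ) (hx : Function.Injective x) (c : ℕ) (s : Finset ℕ) (hc : c ∉ s) :
    ∏ i ∈ s, (x c - x i) / (x c - x i) = 1 :=
  Finset.prod_eq_one fun i hi =>
    div_self (sub_ne_zero.2 fun h => hc (by rwa [hx h]))

lemma hzero (x : ℕ → ℂ) (c k : ℕ) (s : Finset ℕ) (hk : k ∈ s) :
    ∏ i ∈ s, (x k - x i) / (x c - x i) = 0 :=
  Finset.prod_eq_zero hk (by simp)

noncomputable def Rexpr (η θ : ℕ → ℂ) (d p q : ℕ) (z w : ℂ) : ℂ :=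
  (∏ i ∈ range p, (z - η i) / (η p - η i)) *
      (∏ j ∈ (range (d - p + 1)).erase q, (w - θ j) / (θ q - θ j))
    - (∏ i ∈ range p, (z - η i) / (η p - η i)) *
        (∏ j ∈ (range (d - p)).erase q, (w - θ j) / (θ q - θ j))
    + (∏ i ∈ (range (p + 2)).erase p, (z - η i) / (η p - η i)) *
        (∏ j ∈ (range (d - p)).erase q, (w - θ j) / (θ q - θ j))
    + (∑ r ∈ Finset.Icc 1 (d - p - q - 1),
        ((∏ i ∈ (range (p + r + 2)).erase p, (z - η i) / (η p - η i)) *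
            (∏ j ∈ (range (d - p - r)).erase q, (w - θ j) / (θ q - θ j))
          - (∏ i ∈ (range (p + r + 1)).erase p, (z - η i) / (η p - η i)) *
              (∏ j ∈ (range (d - p - r)).erase q,
                (w - θ j) / (θ q - θ j))))

lemma Rval (η θ : ℕ → ℂ) (hη : Function.Injective η) (hθ : Function.Injective θ)
    (d m p q : ℕ) (hpq : p + q + 2 ≤ d) (hp : p < m) (hq : d ≤ q + m)
    (k l : ℕ) (hB : BidIdx d m (k, l)) :
    Rexpr η θ d p q (η k) (θ l) = if (k, l) = (p, q) then 1 else 0 := by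
  have hB' : k + l < d ∨ (k + l = d ∧ k ≤ m) := hB
  have hkl : k + l ≤ d := by omega
  unfold Rexpr
  rcases lt_trichotomy k p with hkp | hkp | hkp
  · -- k < p : all z-products vanish
    rw [if_neg (fun h => (by omega : k ≠ p) (congrArg Prod.fst h))]
    rw [hzero η p k (range p) (Finset.mem_range.2 hkp),
        hzero η p k ((range (p+2)).erase p)
          (Finset.mem_erase.2 ⟨by omega, Finset.mem_range.2 (by omega)⟩),
        Finset.sum_eq_zero (fun r hr => by
          rw [hzero η p k ((range (p+r+2)).erase p)
                (Finset.mem_erase.2 ⟨by omega, Finset.mem_range.2 (by omega)⟩),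
              hzero η p k ((range (p+r+1)).erase p)
                (Finset.mem_erase.2 ⟨by omega, Finset.mem_range.2 (by omega)⟩)]
          ring)]
    ring
  · -- k = p
    subst hkp
    by_cases hl : l = q
    · subst hl
      rw [if_pos rfl]
      rw [hone η hη k (range k) (by simp),
          hone θ hθ l ((range (d-k+1)).erase l) (Finset.notMem_erase _ _),
          hone θ hθ l ((range (d-k)).erase l) (Finset.notMem_erase _ _),
          hone η hη k ((range (k+2)).erase k) (Finset.notMem_erase _ _),
          Finset.sum_eq_zero (fun r hr => by
            rw [hone η hη k ((range (k+r+2)).erase k) (Finset.notMem_erase _ _),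
                hone η hη k ((range (k+r+1)).erase k) (Finset.notMem_erase _ _),
                hone θ hθ l ((range (d-k-r)).erase l) (Finset.notMem_erase _ _)]
            ring)]
      ring
    · rw [if_neg (fun h => hl (congrArg Prod.snd h))]
      rw [hone η hη k (range k) (by simp),
          hone η hη k ((range (k+2)).erase k) (Finset.notMem_erase _ _),
          hzero θ q l ((range (d-k+1)).erase q)
            (Finset.mem_erase.2 ⟨hl, Finset.mem_range.2 (by omega)⟩),
          Finset.sum_eq_zero (fun r hr => by
            rw [hone η hη k ((range (k+r+2)).erase k) (Finset.notMem_erase _ _),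
                hone η hη k ((range (k+r+1)).erase k) (Finset.notMem_erase _ _)]
            ring)]
      ring
  · -- k > p
    rw [if_neg (fun h => (by omega : k ≠ p) (congrArg Prod.fst h))]
    by_cases hl : l = q
    · subst hl
      -- telescoping case
      rw [hone θ hθ l ((range (d-p+1)).erase l) (Finset.notMem_erase _ _),
          hone θ hθ l ((range (d-p)).erase l) (Finset.notMem_erase _ _)]
      set f : ℕ → ℂ := fun s => ∏ i ∈ (range s).erase p, (η k - η i) / (η p - η i) with hf
      have hsum : (∑ r ∈ Finset.Icc 1 (d-p-l-1),
          ((∏ i ∈ (range (p+r+2)).erase p, (η k - η i) / (η p - η i)) *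
              (∏ j ∈ (range (d-p-r)).erase l, (θ l - θ j) / (θ l - θ j))
            - (∏ i ∈ (range (p+r+1)).erase p, (η k - η i) / (η p - η i)) *
                (∏ j ∈ (range (d-p-r)).erase l, (θ l - θ j) / (θ l - θ j))))
          = ∑ r ∈ Finset.Icc 1 (d-p-l-1), (f (p+r+2) - f (p+r+1)) := by
        refine Finset.sum_congr rfl fun r hr => ?_
        rw [hone θ hθ l ((range (d-p-r)).erase l) (Finset.notMem_erase _ _), hf]
        ring
      rw [hsum]
      have htel : (∑ r ∈ Finset.Icc 1 (d-p-l-1), (f (p+r+2) - f (p+r+1)))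
          = f (p + (d-p-l-1) + 2) - f (p + 2) := by
        rw [show Finset.Icc 1 (d-p-l-1) = Finset.Ico 1 (d-p-l-1+1) from by rw [Finset.Ico_add_one_right_eq_Icc], Finset.sum_Ico_eq_sum_range]
        have : ∀ i ∈ range (d-p-l-1+1-1), f (p+(1+i)+2) - f (p+(1+i)+1)
            = (fun i => f (p+i+2)) (i+1) - (fun i => f (p+i+2)) i := by
          intro i _
          simp only
          rw [show p+(1+i)+2 = p+(i+1)+2 from by omega, show p+(1+i)+1 = p+i+2 from by omega]
        rw [Finset.sum_congr rfl this, Finset.sum_range_sub (fun i => f (p+i+2))]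
        rw [show d-p-l-1+1-1 = d-p-l-1 from by omega, show p+0+2 = p+2 from by omega]
      rw [htel]
      have hfz : f (p + (d-p-l-1) + 2) = 0 := by
        rw [hf]
        exact hzero η p k ((range (p+(d-p-l-1)+2)).erase p)
          (Finset.mem_erase.2 ⟨by omega, Finset.mem_range.2 (by omega)⟩)
      rw [hfz, hf]
      ring
    · rw [hzero θ q l ((range (d-p+1)).erase q)
            (Finset.mem_erase.2 ⟨hl, Finset.mem_range.2 (by omega)⟩),
          hzero θ q l ((range (d-p)).erase q)
            (Finset.mem_erase.2 ⟨hl, Finset.mem_range.2 (by omega)⟩),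
          Finset.sum_eq_zero (fun r hr => ?_)]
      · ring
      · by_cases hkr : k ≤ p + r
        · rw [hzero η p k ((range (p+r+2)).erase p)
                (Finset.mem_erase.2 ⟨by omega, Finset.mem_range.2 (by omega)⟩),
              hzero η p k ((range (p+r+1)).erase p)
                (Finset.mem_erase.2 ⟨by omega, Finset.mem_range.2 (by omega)⟩)]
          ring
        · rw [hzero θ q l ((range (d-p-r)).erase q)
                (Finset.mem_erase.2 ⟨hl, Finset.mem_range.2 (by omega)⟩)]
          ring


/-- in the bidimensional intertwining setting, for a point
`(η_p, θ_q) ∈ Ω_N` with `p+q ≤ d−2`, `0 ≤ p ≤ m−1` and `q ≥ d−m`,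
the FLIP is given by the explicit formula with one correcting sum. -/
theorem statement14 (η θ : ℕ → ℂ)
    (hη : Function.Injective η) (hθ : Function.Injective θ)
    (N d m : ℕ) (hN : 1 ≤ N)
    (hlow : d * (d + 1) / 2 < N) (hhigh : N ≤ (d + 1) * (d + 2) / 2)
    (hm : N = d * (d + 1) / 2 + 1 + m)
    (p q : ℕ) (hpq : p + q + 2 ≤ d) (hp : p < m) (hq : d ≤ q + m) :
    ∀ L : (ℂ × ℂ) → ℂ, IsFLIP η θ d m p q L →
      ∀ z w : ℂ,
        L (z, w) =
          (∏ i ∈ range p, (z - η i) / (η p - η i)) *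
              (∏ j ∈ (range (d - p + 1)).erase q, (w - θ j) / (θ q - θ j))
            - (∏ i ∈ range p, (z - η i) / (η p - η i)) *
                (∏ j ∈ (range (d - p)).erase q, (w - θ j) / (θ q - θ j))
            + (∏ i ∈ (range (p + 2)).erase p, (z - η i) / (η p - η i)) *
                (∏ j ∈ (range (d - p)).erase q, (w - θ j) / (θ q - θ j))
            + (∑ r ∈ Finset.Icc 1 (d - p - q - 1),
                ((∏ i ∈ (range (p + r + 2)).erase p, (z - η i) / (η p - η i)) *
                    (∏ j ∈ (range (d - p - r)).erase q, (w - θ j) / (θ q - θ j))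
                  - (∏ i ∈ (range (p + r + 1)).erase p, (z - η i) / (η p - η i)) *
                      (∏ j ∈ (range (d - p - r)).erase q,
                        (w - θ j) / (θ q - θ j)))) := by
  intro L hL z w
  set F : ℕ → ℕ → ((ℂ × ℂ) → ℂ) := fun a b => fun zw =>
    (∏ i ∈ (range a).erase p, (zw.1 - η i) / (η p - η i)) *
      (∏ j ∈ (range b).erase q, (zw.2 - θ j) / (θ q - θ j)) with hF
  have hFmem : ∀ a b A B : ℕ, ((range a).erase p).card ≤ A → ((range b).erase q).card ≤ B →
      (∀ k l : ℕ, k ≤ A → l ≤ B → BidIdx d m (k, l)) → F a b ∈ PolySpace d m := by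
    intro a b A B h1 h2 h3
    rw [hF]
    exact term_mem_polySpace d m η θ p q _ _ A B h1 h2 h3
  have hcard1 : ((range p).erase p).card = p := by
    rw [Finset.erase_eq_of_notMem (by simp), Finset.card_range]
  have hm1 : F p (d - p + 1) ∈ PolySpace d m := by
    refine hFmem p (d - p + 1) p (d - p) (le_of_eq hcard1) ?_ ?_
    · rw [Finset.card_erase_of_mem (Finset.mem_range.2 (by omega)), Finset.card_range] <;> omega
    · intro k l hk hl
      show k + l < d ∨ (k + l = d ∧ k ≤ m)
      omega
  have hm2 : F p (d - p) ∈ PolySpace d m := by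
    refine hFmem p (d - p) p (d - p - 1) (le_of_eq hcard1) ?_ ?_
    · rw [Finset.card_erase_of_mem (Finset.mem_range.2 (by omega)), Finset.card_range] <;> omega
    · intro k l hk hl
      show k + l < d ∨ (k + l = d ∧ k ≤ m)
      omega
  have hm3 : F (p + 2) (d - p) ∈ PolySpace d m := by
    refine hFmem (p + 2) (d - p) (p + 1) (d - p - 1) ?_ ?_ ?_
    · rw [Finset.card_erase_of_mem (Finset.mem_range.2 (by omega)), Finset.card_range] <;> omega
    · rw [Finset.card_erase_of_mem (Finset.mem_range.2 (by omega)), Finset.card_range] <;> omega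
    · intro k l hk hl
      show k + l < d ∨ (k + l = d ∧ k ≤ m)
      omega
  have hm4 : ∀ r ∈ Finset.Icc 1 (d - p - q - 1),
      F (p + r + 2) (d - p - r) - F (p + r + 1) (d - p - r) ∈ PolySpace d m := by
    intro r hr
    obtain ⟨hr1, hr2⟩ := Finset.mem_Icc.1 hr
    refine Submodule.sub_mem _ ?_ ?_
    · refine hFmem (p + r + 2) (d - p - r) (p + r + 1) (d - p - r - 1) ?_ ?_ ?_
      · rw [Finset.card_erase_of_mem (Finset.mem_range.2 (by omega)), Finset.card_range] <;> omega
      · rw [Finset.card_erase_of_mem (Finset.mem_range.2 (by omega)), Finset.card_range] <;> omega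
      · intro k l hk hl
        show k + l < d ∨ (k + l = d ∧ k ≤ m)
        omega
    · refine hFmem (p + r + 1) (d - p - r) (p + r) (d - p - r - 1) ?_ ?_ ?_
      · rw [Finset.card_erase_of_mem (Finset.mem_range.2 (by omega)), Finset.card_range] <;> omega
      · rw [Finset.card_erase_of_mem (Finset.mem_range.2 (by omega)), Finset.card_range] <;> omega
      · intro k l hk hl
        show k + l < d ∨ (k + l = d ∧ k ≤ m)
        omega
  have htotal : F p (d - p + 1) - F p (d - p) + F (p + 2) (d - p)
      + ∑ r ∈ Finset.Icc 1 (d - p - q - 1),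
          (F (p + r + 2) (d - p - r) - F (p + r + 1) (d - p - r)) ∈ PolySpace d m :=
    Submodule.add_mem _ (Submodule.add_mem _ (Submodule.sub_mem _ hm1 hm2) hm3)
      (Submodule.sum_mem _ hm4)
  have hReq : (fun zw : ℂ × ℂ => Rexpr η θ d p q zw.1 zw.2)
      = F p (d - p + 1) - F p (d - p) + F (p + 2) (d - p)
        + ∑ r ∈ Finset.Icc 1 (d - p - q - 1),
            (F (p + r + 2) (d - p - r) - F (p + r + 1) (d - p - r)) := by
    funext zw
    simp only [Pi.add_apply, Pi.sub_apply, Finset.sum_apply, hF, Rexpr]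
    rw [Finset.erase_eq_of_notMem (by simp : p ∉ range p)]
  have hRmem : (fun zw : ℂ × ℂ => Rexpr η θ d p q zw.1 zw.2) ∈ PolySpace d m := by
    rw [hReq]; exact htotal
  have hvans : ∀ k l : ℕ, BidIdx d m (k, l) →
      (L - fun zw : ℂ × ℂ => Rexpr η θ d p q zw.1 zw.2) (η k, θ l) = 0 := by
    intro k l hB
    rw [Pi.sub_apply]
    by_cases h : (k, l) = (p, q)
    · obtain ⟨rfl, rfl⟩ := Prod.mk.inj h
      rw [hL.2.1, Rval η θ hη hθ d m k l hpq hp hq k l hB, if_pos rfl, sub_self]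
    · rw [hL.2.2 k l hB h, Rval η θ hη hθ d m p q hpq hp hq k l hB, if_neg h, sub_zero]
  have hz := polySpace_vanish η θ hη hθ d m
    (L - fun zw : ℂ × ℂ => Rexpr η θ d p q zw.1 zw.2)
    (Submodule.sub_mem _ hL.1 hRmem) hvans (z, w)
  rw [Pi.sub_apply] at hz
  have hfin : L (z, w) = Rexpr η θ d p q z w := sub_eq_zero.1 hz
  exact hfin
end

section
/- Let (η_i)_{i≥0} and (θ_j)_{j≥0} be sequences of pairwise distinct complex numbers, N ≥ 1 with associated integers d, m, and Ω_N, 𝒫_N as in the bidimensional intertwining setting. If (η_p,θ_q) ∈ Ω_N with p+q ≤ d−2 and p = m, then for all (z,w) ∈ ℂ²: l^{(N)}_{(η_m,θ_q)}(z,w) = ∏_{i=0}^{m−1} (z−η_i)/(η_m−η_i) ∏_{j=0,j≠q}^{d−m} (w−θ_j)/(θ_q−θ_j) − ∏_{i=0}^{m−1} (z−η_i)/(η_m−η_i) ∏_{j=0,j≠q}^{d−m−2} (w−θ_j)/(θ_q−θ_j) + ∏_{i=0,i≠m}^{m+1} (z−η_i)/(η_m−η_i) ∏_{j=0,j≠q}^{d−m−2}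 (w−θ_j)/(θ_q−θ_j) + Σ_{r=1}^{d−m−q−2} [∏_{i=0,i≠m}^{m+r+1} (z−η_i)/(η_m−η_i) ∏_{j=0,j≠q}^{d−m−r−2} (w−θ_j)/(θ_q−θ_j) − ∏_{i=0,i≠m}^{m+r} (z−η_i)/(η_m−η_i) ∏_{j=0,j≠q}^{d−m−r−2} (w−θ_j)/(θ_q−θ_j)]. -/
open Finset

namespace Statement15Aux

open Polynomial

/-- Evaluation of a bivariate polynomial (outer variable ↦ `w`, inner ↦ `z`). -/
noncomputable def ev (z w : ℂ) (F : Polynomial (Polynomial ℂ)) : ℂ :=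
  Polynomial.eval w (F.map (Polynomial.evalRingHom z))

lemma ev_sub (z w : ℂ) (F G : Polynomial (Polynomial ℂ)) :
    ev z w (F - G) = ev z w F - ev z w G := by simp [ev]

lemma ev_mul (z w : ℂ) (F G : Polynomial (Polynomial ℂ)) :
    ev z w (F * G) = ev z w F * ev z w G := by simp [ev]

lemma ev_CC (z w a : ℂ) : ev z w (Polynomial.C (Polynomial.C a)) = a := by simp [ev]

lemma ev_monomial (z w : ℂ) (k l : ℕ) :
    ev z w (Polynomial.monomial l (Polynomial.X ^ k)) = z ^ k * w ^ l := by
  simp [ev]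

lemma ev_X_sub_CC (z w a : ℂ) :
    ev z w (Polynomial.X - Polynomial.C (Polynomial.C a)) = w - a := by simp [ev]

lemma ev_eval_C (z w : ℂ) (F : Polynomial (Polynomial ℂ)) :
    Polynomial.eval z (F.eval (Polynomial.C w)) = ev z w F := by
  induction F using Polynomial.induction_on' with
  | add p q hp hq => simp [ev, Polynomial.eval_add] at *; rw [hp, hq]
  | monomial n a => simp [ev, Polynomial.eval_monomial, Polynomial.map_monomial, mul_comm]

/-- Unisolvence of the intertwining grid for the spaces `𝒫_N`. -/
lemma unisolv : ∀ (d m : ℕ) (η θ : ℕ → ℂ), Function.Injective η → Function.Injective θ →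
    ∀ F : Polynomial (Polynomial ℂ),
      (∀ k l : ℕ, ¬ BidIdx d m (k, l) → (F.coeff l).coeff k = 0) →
      (∀ k l : ℕ, BidIdx d m (k, l) → ev (η k) (θ l) F = 0) → F = 0 := by
  intro d
  induction d with
  | zero =>
    intro m η θ hη hθ F hsupp hvan
    have hF : F = Polynomial.C (Polynomial.C ((F.coeff 0).coeff 0)) := by
      apply Polynomial.ext; intro l
      apply Polynomial.ext; intro k
      rcases Nat.eq_zero_or_pos l with rfl | hl
      · rcases Nat.eq_zero_or_pos k with rfl | hk
        · simp
        · rw [hsupp k 0 (by simp [BidIdx]; omega)]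
          simp [Polynomial.coeff_C, Nat.pos_iff_ne_zero.mp hk]
      · rw [hsupp k l (by simp [BidIdx]; omega)]
        simp [Polynomial.coeff_C, Nat.pos_iff_ne_zero.mp hl]
    have h00 : ev (η 0) (θ 0) F = 0 := hvan 0 0 (Or.inr ⟨rfl, Nat.zero_le m⟩)
    rw [hF, ev_CC] at h00
    rw [hF, h00]; simp
  | succ d ih =>
    intro m η θ hη hθ F hsupp hvan
    obtain ⟨K, hK1, hK2⟩ : ∃ K : ℕ, (∀ k l : ℕ, BidIdx (d+1) m (k, l) → k ≤ K) ∧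
        (∀ k : ℕ, k ≤ K → BidIdx (d+1) m (k, 0)) := by
      rcases le_or_gt (d + 1) m with h | h
      · exact ⟨d + 1, fun k l hkl => by simp [BidIdx] at hkl; omega,
          fun k hk => by simp [BidIdx]; omega⟩
      · exact ⟨d, fun k l hkl => by simp [BidIdx] at hkl; omega,
          fun k hk => by simp [BidIdx]; omega⟩
    set g : Polynomial ℂ := F.eval (Polynomial.C (θ 0)) with hg
    have hgc : ∀ k : ℕ, K < k → g.coeff k = 0 := by
      intro k hk
      rw [hg, Polynomial.eval_eq_sum_range, Polynomial.finset_sum_coeff]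
      apply Finset.sum_eq_zero
      intro i _
      rw [← Polynomial.C_pow, Polynomial.coeff_mul_C,
        hsupp k i (fun hB => absurd (hK1 k i hB) (by omega)), zero_mul]
    have hg0 : g = 0 := by
      apply Polynomial.eq_zero_of_natDegree_lt_card_of_eval_eq_zero' g
          ((Finset.range (K + 1)).image η)
      · intro x hx
        obtain ⟨k, hk, rfl⟩ := Finset.mem_image.mp hx
        rw [ev_eval_C]
        exact hvan k 0 (hK2 k (by simp at hk; omega))
      · rw [Finset.card_image_of_injective _ hη, Finset.card_range]
        exact Nat.lt_succ_of_le (Polynomial.natDegree_le_iff_coeff_eq_zero.mpr hgc)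
    obtain ⟨G, hFG⟩ : Polynomial.X - Polynomial.C (Polynomial.C (θ 0)) ∣ F :=
      Polynomial.dvd_iff_isRoot.mpr hg0
    have hGsupp0 : ∀ t l k : ℕ, G.natDegree + 1 ≤ l + t →
        ¬ BidIdx (d+1) m (k, l+1) → (G.coeff l).coeff k = 0 := by
      intro t
      induction t with
      | zero =>
        intro l k hl _
        have : G.coeff l = 0 := Polynomial.coeff_eq_zero_of_natDegree_lt (by omega)
        rw [this]; simp
      | succ t iht =>
        intro l k hl hB
        rcases le_or_gt (G.natDegree + 1) l with hcase | hcase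
        · have : G.coeff l = 0 := Polynomial.coeff_eq_zero_of_natDegree_lt (by omega)
          rw [this]; simp
        · have hrec : G.coeff l = F.coeff (l+1) + Polynomial.C (θ 0) * G.coeff (l+1) := by
            rw [hFG, sub_mul, Polynomial.coeff_sub, Polynomial.coeff_X_mul,
              Polynomial.coeff_C_mul]
            ring
          have hB2 : ¬ BidIdx (d+1) m (k, l+2) := by
            simp [BidIdx] at hB ⊢; omega
          rw [hrec, Polynomial.coeff_add, Polynomial.coeff_C_mul,
            hsupp k (l+1) hB, iht l.succ k (by omega) hB2]
          simp
    have hGsupp : ∀ k l : ℕ, ¬ BidIdx d m (k, l) → (G.coeff l).coeff k = 0 := by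
      intro k l h
      exact hGsupp0 (G.natDegree + 1) l k (by omega)
        (by simp [BidIdx] at h ⊢; omega)
    have hGvan : ∀ k l : ℕ, BidIdx d m (k, l) → ev (η k) (θ (l+1)) G = 0 := by
      intro k l h
      have hmem : BidIdx (d+1) m (k, l+1) := by simp [BidIdx] at h ⊢; omega
      have := hvan k (l+1) hmem
      rw [hFG, ev_mul, ev_X_sub_CC] at this
      have hne : θ (l+1) - θ 0 ≠ 0 :=
        sub_ne_zero.mpr (fun e => Nat.succ_ne_zero l (hθ e))
      exact (mul_eq_zero.mp this).resolve_left hne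
    have hG0 : G = 0 :=
      ih m η (fun j => θ (j+1)) hη (fun a b hab => Nat.succ_injective (hθ hab)) G hGsupp hGvan
    rw [hFG, hG0, mul_zero]

lemma lower_closed {d m a b k l : ℕ} (hab : BidIdx d m (a, b)) (hk : k ≤ a) (hl : l ≤ b) :
    BidIdx d m (k, l) := by simp [BidIdx] at hab ⊢; omega

lemma repr_exists (d m : ℕ) {L : (ℂ × ℂ) → ℂ} (hL : L ∈ PolySpace d m) :
    ∃ F : Polynomial (Polynomial ℂ),
      (∀ k l : ℕ, ¬ BidIdx d m (k, l) → (F.coeff l).coeff k = 0) ∧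
      ∀ z w : ℂ, L (z, w) = ev z w F := by
  refine Submodule.span_induction ?_ ?_ ?_ ?_ hL
  · rintro f ⟨k, l, hkl, rfl⟩
    refine ⟨Polynomial.monomial l (Polynomial.X ^ k), ?_, ?_⟩
    · intro k' l' hnot
      rw [Polynomial.coeff_monomial]
      split_ifs with h1
      · subst h1
        rw [Polynomial.coeff_X_pow]
        have : k' ≠ k := fun e => hnot (e ▸ hkl)
        simp [this]
      · simp
    · intro z w; rw [ev_monomial]
  · exact ⟨0, by simp, by simp [ev]⟩
  · rintro x y hx hy ⟨F, hF1, hF2⟩ ⟨G, hG1, hG2⟩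
    refine ⟨F + G, fun k l h => ?_, fun z w => ?_⟩
    · simp [hF1 k l h, hG1 k l h]
    · simp only [Pi.add_apply, hF2 z w, hG2 z w, ev]
      simp
  · rintro c x hx ⟨F, hF1, hF2⟩
    refine ⟨Polynomial.C (Polynomial.C c) * F, fun k l h => ?_, fun z w => ?_⟩
    · rw [Polynomial.coeff_C_mul, Polynomial.coeff_C_mul, hF1 k l h, mul_zero]
    · simp only [Pi.smul_apply, hF2 z w, smul_eq_mul, ev]
      simp

/-- Elements of `𝒫_N` are uniquely determined by their values on the grid `Ω_N`. -/
lemma flip_unique (d m : ℕ) (η θ : ℕ → ℂ) (hη : Function.Injective η)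
    (hθ : Function.Injective θ) {L1 L2 : (ℂ × ℂ) → ℂ}
    (hL1 : L1 ∈ PolySpace d m) (h2 : L2 ∈ PolySpace d m)
    (hval : ∀ k l : ℕ, BidIdx d m (k, l) → L1 (η k, θ l) = L2 (η k, θ l)) :
    ∀ z w : ℂ, L1 (z, w) = L2 (z, w) := by
  obtain ⟨F, hF1, hF2⟩ := repr_exists d m hL1
  obtain ⟨G, hG1, hG2⟩ := repr_exists d m h2
  have hFG : F - G = 0 := by
    apply unisolv d m η θ hη hθ
    · intro k l h
      simp [hF1 k l h, hG1 k l h]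
    · intro k l h
      rw [ev_sub, ← hF2, ← hG2, hval k l h, sub_self]
  intro z w
  rw [hF2, hG2, sub_eq_zero.mp hFG]

lemma prod_mem (d m a b : ℕ) (hab : BidIdx d m (a, b)) (p q : Polynomial ℂ)
    (hp : p.natDegree ≤ a) (hq : q.natDegree ≤ b) :
    (fun v : ℂ × ℂ => p.eval v.1 * q.eval v.2) ∈ PolySpace d m := by
  have hfun : (fun v : ℂ × ℂ => p.eval v.1 * q.eval v.2)
      = ∑ k ∈ range (a + 1), ∑ l ∈ range (b + 1),
          (p.coeff k * q.coeff l) • (fun v : ℂ × ℂ => v.1 ^ k * v.2 ^ l) := by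
    funext v
    simp only [Finset.sum_apply, Pi.smul_apply, smul_eq_mul]
    rw [Polynomial.eval_eq_sum_range' (lt_of_le_of_lt hp (Nat.lt_succ_self a)),
      Polynomial.eval_eq_sum_range' (lt_of_le_of_lt hq (Nat.lt_succ_self b)),
      Finset.sum_mul_sum]
    refine Finset.sum_congr rfl fun k _ => Finset.sum_congr rfl fun l _ => by ring
  rw [hfun]
  refine Submodule.sum_mem _ fun k hk => Submodule.sum_mem _ fun l hl =>
    Submodule.smul_mem _ _ (Submodule.subset_span ⟨k, l, ?_, rfl⟩)
  exact lower_closed hab (by simp at hk; omega) (by simp at hl; omega)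

lemma exists_poly_prod (t : Finset ℕ) (a c : ℕ → ℂ) :
    ∃ p : Polynomial ℂ, p.natDegree ≤ t.card ∧
      ∀ z : ℂ, p.eval z = ∏ i ∈ t, (z - a i) / c i := by
  refine ⟨∏ i ∈ t, (Polynomial.C (c i)⁻¹ * (Polynomial.X - Polynomial.C (a i))), ?_, ?_⟩
  · refine le_trans (Polynomial.natDegree_prod_le t _) ?_
    have h1 : ∀ i ∈ t,
        (Polynomial.C (c i)⁻¹ * (Polynomial.X - Polynomial.C (a i))).natDegree ≤ 1 :=
      fun i _ => le_trans Polynomial.natDegree_mul_le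
        (by simp [Polynomial.natDegree_X_sub_C])
    exact le_trans (Finset.sum_le_sum h1) (by simp)
  · intro z
    rw [Polynomial.eval_prod]
    refine Finset.prod_congr rfl fun i _ => ?_
    simp [div_eq_mul_inv]; ring

lemma telescope (f : ℕ → ℂ) (m : ℕ) :
    ∀ n : ℕ, ∑ r ∈ Finset.Icc 1 n, (f (m + r + 2) - f (m + r + 1)) = f (m + n + 2) - f (m + 2) := by
  intro n
  induction n with
  | zero => simp
  | succ n ih =>
    rw [Finset.sum_Icc_succ_top (by omega), ih]
    have e1 : m + (n + 1) + 1 = m + n + 2 := by omega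
    have e2 : m + (n + 1) + 2 = m + n + 3 := by omega
    rw [e1, e2, show m + n + 3 = m + (n+1) + 2 from by omega]
    ring

end Statement15Aux

/-- in the bidimensional intertwining setting, for a point
`(η_m, θ_q) ∈ Ω_N` with `p = m` and `p+q ≤ d−2`,
the FLIP is given by the explicit formula with one correcting sum. -/
theorem statement15 (η θ : ℕ → ℂ)
    (hη : Function.Injective η) (hθ : Function.Injective θ)
    (N d m : ℕ) (hN : 1 ≤ N)
    (hlow : d * (d + 1) / 2 < N) (hhigh : N ≤ (d + 1) * (d + 2) / 2)
    (hm : N = d * (d + 1) / 2 + 1 + m)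
    (q : ℕ) (hpq : m + q + 2 ≤ d) :
    ∀ L : (ℂ × ℂ) → ℂ, IsFLIP η θ d m m q L →
      ∀ z w : ℂ,
        L (z, w) =
          (∏ i ∈ range m, (z - η i) / (η m - η i)) *
              (∏ j ∈ (range (d - m + 1)).erase q, (w - θ j) / (θ q - θ j))
            - (∏ i ∈ range m, (z - η i) / (η m - η i)) *
                (∏ j ∈ (range (d - m - 1)).erase q, (w - θ j) / (θ q - θ j))
            + (∏ i ∈ (range (m + 2)).erase m, (z - η i) / (η m - η i)) *
                (∏ j ∈ (range (d - m - 1)).erase q, (w - θ j) / (θ q - θ j))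
            + (∑ r ∈ Finset.Icc 1 (d - m - q - 2),
                ((∏ i ∈ (range (m + r + 2)).erase m, (z - η i) / (η m - η i)) *
                    (∏ j ∈ (range (d - m - r - 1)).erase q, (w - θ j) / (θ q - θ j))
                  - (∏ i ∈ (range (m + r + 1)).erase m, (z - η i) / (η m - η i)) *
                      (∏ j ∈ (range (d - m - r - 1)).erase q,
                        (w - θ j) / (θ q - θ j)))) := by
  classical
  intro L hL z w
  open Statement15Aux in
  set Rf : (ℂ × ℂ) → ℂ := fun v =>
    (∏ i ∈ range m, (v.1 - η i) / (η m - η i)) *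
        (∏ j ∈ (range (d - m + 1)).erase q, (v.2 - θ j) / (θ q - θ j))
      - (∏ i ∈ range m, (v.1 - η i) / (η m - η i)) *
          (∏ j ∈ (range (d - m - 1)).erase q, (v.2 - θ j) / (θ q - θ j))
      + (∏ i ∈ (range (m + 2)).erase m, (v.1 - η i) / (η m - η i)) *
          (∏ j ∈ (range (d - m - 1)).erase q, (v.2 - θ j) / (θ q - θ j))
      + (∑ r ∈ Finset.Icc 1 (d - m - q - 2),
          ((∏ i ∈ (range (m + r + 2)).erase m, (v.1 - η i) / (η m - η i)) *
              (∏ j ∈ (range (d - m - r - 1)).erase q, (v.2 - θ j) / (θ q - θ j))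
            - (∏ i ∈ (range (m + r + 1)).erase m, (v.1 - η i) / (η m - η i)) *
                (∏ j ∈ (range (d - m - r - 1)).erase q, (v.2 - θ j) / (θ q - θ j))))
    with hRf
  -- polynomials representing the one-variable product factors
  choose p0 hp0d hp0e using fun _ : Unit =>
    Statement15Aux.exists_poly_prod (range m) η (fun i => η m - η i)
  choose pA hpAd hpAe using fun r : ℕ =>
    Statement15Aux.exists_poly_prod ((range (m + r + 2)).erase m) η (fun i => η m - η i)
  choose pB hpBd hpBe using fun r : ℕ =>
    Statement15Aux.exists_poly_prod ((range (m + r + 1)).erase m) η (fun i => η m - η i)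
  choose qQ hqQd hqQe using fun s : ℕ =>
    Statement15Aux.exists_poly_prod ((range s).erase q) θ (fun j => θ q - θ j)
  have cardA : ∀ r : ℕ, ((range (m + r + 2)).erase m).card = m + r + 1 := by
    intro r
    rw [Finset.card_erase_of_mem (Finset.mem_range.mpr (by omega)), Finset.card_range]
    omega
  have cardB : ∀ r : ℕ, ((range (m + r + 1)).erase m).card = m + r := by
    intro r
    rw [Finset.card_erase_of_mem (Finset.mem_range.mpr (by omega)), Finset.card_range]
    omega
  have cardQ : ∀ s : ℕ, q < s → ((range s).erase q).card = s - 1 := by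
    intro s hs
    rw [Finset.card_erase_of_mem (Finset.mem_range.mpr hs), Finset.card_range]
  -- membership of the explicit formula in 𝒫_N
  have hRmem : Rf ∈ PolySpace d m := by
    have hRfM : Rf =
        ((fun v : ℂ × ℂ => (p0 ()).eval v.1 * (qQ (d - m + 1)).eval v.2)
          - (fun v : ℂ × ℂ => (p0 ()).eval v.1 * (qQ (d - m - 1)).eval v.2)
          + (fun v : ℂ × ℂ => (pA 0).eval v.1 * (qQ (d - m - 1)).eval v.2))
          + ∑ r ∈ Finset.Icc 1 (d - m - q - 2),
              ((fun v : ℂ × ℂ => (pA r).eval v.1 * (qQ (d - m - r - 1)).eval v.2)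
                - (fun v : ℂ × ℂ => (pB r).eval v.1 * (qQ (d - m - r - 1)).eval v.2)) := by
      funext v
      simp only [hRf, Pi.add_apply, Pi.sub_apply, Finset.sum_apply]
      simp only [hp0e, hpAe, hpBe, hqQe]
      try norm_num
    rw [hRfM]
    refine Submodule.add_mem _ (Submodule.add_mem _ (Submodule.sub_mem _ ?_ ?_) ?_)
      (Submodule.sum_mem _ fun r hr => Submodule.sub_mem _ ?_ ?_)
    · refine Statement15Aux.prod_mem d m m (d - m) (by simp [BidIdx]; omega) _ _
        (le_trans (hp0d ()) (by simp)) (le_trans (hqQd _) ?_)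
      rw [cardQ _ (by omega)]; omega
    · refine Statement15Aux.prod_mem d m m (d - m - 2) (by simp [BidIdx]; omega) _ _
        (le_trans (hp0d ()) (by simp)) (le_trans (hqQd _) ?_)
      rw [cardQ _ (by omega)]; omega
    · refine Statement15Aux.prod_mem d m (m + 1) (d - m - 2) (by simp [BidIdx]; omega) _ _
        (le_trans (hpAd 0) ?_) (le_trans (hqQd _) ?_)
      · rw [cardA 0]
      · rw [cardQ _ (by omega)]; omega
    · simp only [Finset.mem_Icc] at hr
      refine Statement15Aux.prod_mem d m (m + r + 1) (d - m - r - 2)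
        (by simp [BidIdx]; omega) _ _ (le_trans (hpAd r) ?_) (le_trans (hqQd _) ?_)
      · rw [cardA r]
      · rw [cardQ _ (by omega)]; omega
    · simp only [Finset.mem_Icc] at hr
      refine Statement15Aux.prod_mem d m (m + r) (d - m - r - 2)
        (by simp [BidIdx]; omega) _ _ (le_trans (hpBd r) ?_) (le_trans (hqQd _) ?_)
      · rw [cardB r]
      · rw [cardQ _ (by omega)]; omega
  -- value computations
  have hQ1 : ∀ s : ℕ, (∏ j ∈ (range s).erase q, (θ q - θ j) / (θ q - θ j)) = 1 :=
    fun s => Finset.prod_eq_one fun j hj =>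
      div_self (sub_ne_zero.mpr fun e => (Finset.mem_erase.mp hj).1 (hθ e).symm)
  have hQ0 : ∀ s l : ℕ, l ≠ q → l < s →
      (∏ j ∈ (range s).erase q, (θ l - θ j) / (θ q - θ j)) = 0 :=
    fun s l h1 h2 => Finset.prod_eq_zero
      (Finset.mem_erase.mpr ⟨h1, Finset.mem_range.mpr h2⟩) (by simp)
  have hE1 : ∀ t : ℕ, (∏ i ∈ (range t).erase m, (η m - η i) / (η m - η i)) = 1 :=
    fun t => Finset.prod_eq_one fun i hi =>
      div_self (sub_ne_zero.mpr fun e => (Finset.mem_erase.mp hi).1 (hη e).symm)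
  have hE0 : ∀ t k : ℕ, k ≠ m → k < t →
      (∏ i ∈ (range t).erase m, (η k - η i) / (η m - η i)) = 0 :=
    fun t k h1 h2 => Finset.prod_eq_zero
      (Finset.mem_erase.mpr ⟨h1, Finset.mem_range.mpr h2⟩) (by simp)
  have hP1 : (∏ i ∈ range m, (η m - η i) / (η m - η i)) = 1 :=
    Finset.prod_eq_one fun i hi =>
      div_self (sub_ne_zero.mpr fun e => (Finset.mem_range.mp hi).ne' (hη e))
  have hP0 : ∀ k : ℕ, k < m → (∏ i ∈ range m, (η k - η i) / (η m - η i)) = 0 :=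
    fun k hk => Finset.prod_eq_zero (Finset.mem_range.mpr hk) (by simp)
  have hval : ∀ k l : ℕ, BidIdx d m (k, l) → L (η k, θ l) = Rf (η k, θ l) := by
    intro k l hkl
    by_cases hmq : (k, l) = (m, q)
    · rw [Prod.mk.injEq] at hmq
      obtain ⟨hk1, hl1⟩ := hmq
      rw [hk1, hl1, hL.2.1]
      symm
      have hsz : ∀ r ∈ Finset.Icc 1 (d - m - q - 2),
          ((∏ i ∈ (range (m + r + 2)).erase m, (η m - η i) / (η m - η i)) *
              (∏ j ∈ (range (d - m - r - 1)).erase q, (θ q - θ j) / (θ q - θ j))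
            - (∏ i ∈ (range (m + r + 1)).erase m, (η m - η i) / (η m - η i)) *
                (∏ j ∈ (range (d - m - r - 1)).erase q, (θ q - θ j) / (θ q - θ j))) = 0 := by
        intro r _
        rw [hE1, hE1, hQ1]; ring
      simp only [hRf]
      rw [Finset.sum_eq_zero hsz, hP1, hE1, hQ1, hQ1]
      norm_num
    · rw [hL.2.2 k l hkl hmq]
      symm
      rcases Nat.lt_trichotomy k m with hk | rfl | hk
      · -- k < m : every z-product vanishes
        have hkm : k ≠ m := by omega
        have hA : ∀ r : ℕ,
            (∏ i ∈ (range (m + r + 2)).erase m, (η k - η i) / (η m - η i)) = 0 :=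
          fun r => hE0 _ k hkm (by omega)
        have hB : ∀ r : ℕ,
            (∏ i ∈ (range (m + r + 1)).erase m, (η k - η i) / (η m - η i)) = 0 :=
          fun r => hE0 _ k hkm (by omega)
        have hsz : ∀ r ∈ Finset.Icc 1 (d - m - q - 2),
            ((∏ i ∈ (range (m + r + 2)).erase m, (η k - η i) / (η m - η i)) *
                (∏ j ∈ (range (d - m - r - 1)).erase q, (θ l - θ j) / (θ q - θ j))
              - (∏ i ∈ (range (m + r + 1)).erase m, (η k - η i) / (η m - η i)) *
                  (∏ j ∈ (range (d - m - r - 1)).erase q, (θ l - θ j) / (θ q - θ j))) = 0 := by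
          intro r _
          rw [hA r, hB r]; ring
        simp only [hRf]
        rw [Finset.sum_eq_zero hsz, hP0 k hk, hE0 (m + 2) k hkm (by omega)]
        ring
      · -- k = m (the variables were merged; the surviving name is `k`)
        have hlq : l ≠ q := fun e => hmq (by rw [e])
        have hld : k + l ≤ d := by simp [BidIdx] at hkl; omega
        have hsz : ∀ r ∈ Finset.Icc 1 (d - k - q - 2),
            ((∏ i ∈ (range (k + r + 2)).erase k, (η k - η i) / (η k - η i)) *
                (∏ j ∈ (range (d - k - r - 1)).erase q, (θ l - θ j) / (θ q - θ j))
              - (∏ i ∈ (range (k + r + 1)).erase k, (η k - η i) / (η k - η i)) *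
                  (∏ j ∈ (range (d - k - r - 1)).erase q, (θ l - θ j) / (θ q - θ j))) = 0 := by
          intro r _
          rw [hE1, hE1]; ring
        simp only [hRf]
        rw [Finset.sum_eq_zero hsz, hP1, hE1, hQ0 (d - k + 1) l hlq (by omega)]
        ring
      · -- k > m
        have hkd : k + l < d := by
          have := hkl
          simp [BidIdx] at this; omega
        have hkm : k ≠ m := by omega
        by_cases hlq : l = q
        · subst hlq
          simp only [hRf]
          simp only [hQ1, mul_one]
          have hs := Statement15Aux.telescope
            (fun t => ∏ i ∈ (range t).erase m, (η k - η i) / (η m - η i)) m (d - m - l - 2)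
          rw [hs, hE0 (m + (d - m - l - 2) + 2) k hkm (by omega)]
          ring
        · -- k > m, l ≠ q : every term vanishes
          have hterm : ∀ r ∈ Finset.Icc 1 (d - m - q - 2),
              ((∏ i ∈ (range (m + r + 2)).erase m, (η k - η i) / (η m - η i)) *
                  (∏ j ∈ (range (d - m - r - 1)).erase q, (θ l - θ j) / (θ q - θ j))
                - (∏ i ∈ (range (m + r + 1)).erase m, (η k - η i) / (η m - η i)) *
                    (∏ j ∈ (range (d - m - r - 1)).erase q, (θ l - θ j) / (θ q - θ j))) = 0 := by
            intro r hr
            simp only [Finset.mem_Icc] at hr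
            rcases le_or_gt (m + r + 1) k with hc | hc
            · rw [hQ0 (d - m - r - 1) l hlq (by omega)]
              ring
            · rw [hE0 (m + r + 2) k hkm (by omega), hE0 (m + r + 1) k hkm (by omega)]
              ring
          simp only [hRf]
          rw [Finset.sum_eq_zero hterm, hQ0 (d - m + 1) l hlq (by omega),
            hQ0 (d - m - 1) l hlq (by omega)]
          ring
  exact Statement15Aux.flip_unique d m η θ hη hθ hL.1 hRmem hval z w
end

section
/- Let (η_i)_{i≥0} and (θ_j)_{j≥0} be sequences of pairwise distinct complex numbers, N ≥ 1 with associated integers d, m, and Ω_N, 𝒫_N as in the bidimensional intertwining setting. If (η_p,θ_q) ∈ Ω_N with p+q ≤ d−2 and p ≥ m+1, then for all (z,w) ∈ ℂ²: l^{(N)}_{(η_p,θ_q)}(z,w) = ∏_{i=0}^{p−1} (z−η_i)/(η_p−η_i) ∏_{j=0,j≠q}^{d−p−1} (w−θ_j)/(θ_q−θ_j) − ∏_{i=0}^{p−1} (z−η_i)/(η_p−η_i) ∏_{j=0,j≠q}^{d−p−2} (w−θ_j)/(θ_q−θ_j) + ∏_{i=0,i≠p}^{p+1} (z−η_i)/(η_p−η_i)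 ∏_{j=0,j≠q}^{d−p−2} (w−θ_j)/(θ_q−θ_j) + Σ_{r=1}^{d−p−q−2} [∏_{i=0,i≠p}^{p+r+1} (z−η_i)/(η_p−η_i) ∏_{j=0,j≠q}^{d−p−r−2} (w−θ_j)/(θ_q−θ_j) − ∏_{i=0,i≠p}^{p+r} (z−η_i)/(η_p−η_i) ∏_{j=0,j≠q}^{d−p−r−2} (w−θ_j)/(θ_q−θ_j)]. -/
open Finset

/- ========= auxiliary material ========= -/

section Aux

open Polynomial

/-- Unisolvence for "staircase" grids: a bivariate polynomial (element of `ℂ[w][z]`)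
whose `z^k`-coefficient has `w`-degree `< c k` for an antitone `c`, and which vanishes
at all grid points `(η k, θ l)` with `l < c k`, is zero. -/
lemma aux_unisolv : ∀ (K : ℕ) (c : ℕ → ℕ) (η θ : ℕ → ℂ), Function.Injective η →
    Function.Injective θ → (∀ k, c (k+1) ≤ c k) → (∀ k, K ≤ k → c k = 0) →
    ∀ P : Polynomial (Polynomial ℂ),
    (∀ k, (P.coeff k).degree < (c k : WithBot ℕ)) →
    (∀ k l, k < K → l < c k → ((P.eval (Polynomial.C (η k))).eval (θ l)) = 0) →
    P = 0 := by
  intro K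
  induction K with
  | zero =>
    intro c η θ hη hθ hc hK P hdeg _
    ext k : 1
    have h := hdeg k
    rw [hK k (Nat.zero_le k)] at h
    exact Polynomial.degree_eq_bot.mp (Nat.WithBot.lt_zero_iff.mp (by exact_mod_cast h))
  | succ K ih =>
    intro c η θ hη hθ hc hK P hdeg hvan
    by_cases hP : P = 0
    · exact hP
    have hcmono : ∀ i j : ℕ, i ≤ j → c j ≤ c i := fun i j hij => by
      induction hij with
      | refl => exact le_refl _
      | step h ihh => exact le_trans (hc _) ihh
    set f : Polynomial ℂ := P.eval (Polynomial.C (η 0)) with hf_def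
    have hfdeg : f.degree < (c 0 : WithBot ℕ) := by
      rw [hf_def, Polynomial.eval_eq_sum_range]
      refine lt_of_le_of_lt (Polynomial.degree_sum_le _ _) ?_
      rw [Finset.sup_lt_iff (by exact WithBot.bot_lt_coe _)]
      intro k _
      refine lt_of_le_of_lt (Polynomial.degree_mul_le _ _) ?_
      have h1 : (Polynomial.C (η 0) ^ k : Polynomial ℂ).degree ≤ 0 := by
        rw [← map_pow]; exact Polynomial.degree_C_le
      calc (P.coeff k).degree + (Polynomial.C (η 0) ^ k).degree
          ≤ (P.coeff k).degree + 0 := add_le_add le_rfl h1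
        _ = (P.coeff k).degree := add_zero _
        _ < (c k : WithBot ℕ) := hdeg k
        _ ≤ (c 0 : WithBot ℕ) := by exact_mod_cast hcmono 0 k (Nat.zero_le k)
    have hf0 : f = 0 := by
      by_cases hf : f = 0
      · exact hf
      refine Polynomial.eq_zero_of_natDegree_lt_card_of_eval_eq_zero' f
        ((Finset.range (c 0)).image θ) ?_ ?_
      · intro i hi
        obtain ⟨l, hl, rfl⟩ := Finset.mem_image.mp hi
        exact hvan 0 l (Nat.succ_pos K) (Finset.mem_range.mp hl)
      · rw [Finset.card_image_of_injective _ hθ, Finset.card_range]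
        exact_mod_cast (Polynomial.degree_eq_natDegree hf ▸ hfdeg)
    obtain ⟨Q, hQ⟩ := Polynomial.dvd_iff_isRoot.mpr hf0
    have hQne : Q ≠ 0 := by rintro rfl; exact hP (by simpa using hQ)
    have hdegPQ : P.natDegree = Q.natDegree + 1 := by
      rw [hQ, Polynomial.natDegree_mul (Polynomial.X_sub_C_ne_zero _) hQne,
        Polynomial.natDegree_X_sub_C, add_comm]
    have hcoeff : ∀ k, Q.coeff k = P.coeff (k+1) + Polynomial.C (η 0) * Q.coeff (k+1) := by
      intro k
      have : P.coeff (k+1) = Q.coeff k - Polynomial.C (η 0) * Q.coeff (k+1) := by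
        rw [hQ]; simp [sub_mul, Polynomial.coeff_X_mul]
      rw [this]; ring
    have key : ∀ n k, P.natDegree ≤ k + n → (Q.coeff k).degree < (c (k+1) : WithBot ℕ) := by
      intro n
      induction n with
      | zero =>
        intro k hk
        have : Q.coeff k = 0 := Polynomial.coeff_eq_zero_of_natDegree_lt (by omega)
        rw [this, Polynomial.degree_zero]; exact WithBot.bot_lt_coe _
      | succ n ihn =>
        intro k hk
        by_cases h : P.natDegree ≤ k + n
        · exact ihn k h
        rw [hcoeff k]
        refine lt_of_le_of_lt (Polynomial.degree_add_le _ _) (max_lt (hdeg (k+1)) ?_)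
        refine lt_of_le_of_lt (Polynomial.degree_mul_le _ _) ?_
        calc (Polynomial.C (η 0)).degree + (Q.coeff (k+1)).degree
            ≤ 0 + (Q.coeff (k+1)).degree := add_le_add Polynomial.degree_C_le le_rfl
          _ = (Q.coeff (k+1)).degree := zero_add _
          _ < (c (k+2) : WithBot ℕ) := ihn (k+1) (by omega)
          _ ≤ (c (k+1) : WithBot ℕ) := by exact_mod_cast hc (k+1)
    have hQ0 : Q = 0 := by
      refine ih (fun k => c (k+1)) (fun k => η (k+1)) θ
        (fun a b hab => by have := hη hab; omega) hθ (fun k => hc (k+1))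
        (fun k hk => hK (k+1) (by omega)) Q
        (fun k => key P.natDegree k (Nat.le_add_left _ _)) ?_
      intro k l hk hl
      have hv := hvan (k+1) l (by omega) hl
      rw [hQ] at hv
      simp only [Polynomial.eval_mul, Polynomial.eval_sub, Polynomial.eval_X,
        Polynomial.eval_C] at hv
      rcases mul_eq_zero.mp hv with h | h
      · exact absurd (sub_eq_zero.mp h) (fun he => by have := hη he; omega)
      · exact h
    rw [hQ, hQ0, mul_zero]

/-- Coefficient-degree profile of `𝒫_N`. -/
noncomputable def crep (d m : ℕ) : ℕ → ℕ := fun k => if k ≤ m then d+1-k else d-k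

/-- `f : ℂ² → ℂ` is representable by an element of `ℂ[w][z]` with the degree profile
of `𝒫_N`. -/
def BRep (d m : ℕ) (f : (ℂ × ℂ) → ℂ) : Prop :=
  ∃ P : Polynomial (Polynomial ℂ),
    (∀ k, (P.coeff k).degree < (crep d m k : WithBot ℕ)) ∧
    ∀ z w : ℂ, f (z, w) = (P.eval (Polynomial.C z)).eval w

lemma BRep.zero (d m : ℕ) : BRep d m 0 := by
  refine ⟨0, fun k => ?_, fun z w => by simp⟩
  rw [Polynomial.coeff_zero, Polynomial.degree_zero]
  exact WithBot.bot_lt_coe _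

lemma BRep.add {d m : ℕ} {f g : (ℂ × ℂ) → ℂ} (hf : BRep d m f) (hg : BRep d m g) :
    BRep d m (f + g) := by
  obtain ⟨P, hP, hPe⟩ := hf
  obtain ⟨Q, hQ, hQe⟩ := hg
  refine ⟨P + Q, fun k => ?_, fun z w => by simp [hPe, hQe]⟩
  rw [Polynomial.coeff_add]
  exact lt_of_le_of_lt (Polynomial.degree_add_le _ _) (max_lt (hP k) (hQ k))

lemma BRep.smul {d m : ℕ} (a : ℂ) {f : (ℂ × ℂ) → ℂ} (hf : BRep d m f) :
    BRep d m (a • f) := by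
  obtain ⟨P, hP, hPe⟩ := hf
  refine ⟨Polynomial.C (Polynomial.C a) * P, fun k => ?_, fun z w => by simp [hPe]⟩
  rw [Polynomial.coeff_C_mul]
  refine lt_of_le_of_lt (Polynomial.degree_mul_le _ _) ?_
  calc (Polynomial.C a).degree + (P.coeff k).degree
      ≤ 0 + (P.coeff k).degree := add_le_add Polynomial.degree_C_le le_rfl
    _ = (P.coeff k).degree := zero_add _
    _ < _ := hP k

lemma BRep.sub {d m : ℕ} {f g : (ℂ × ℂ) → ℂ} (hf : BRep d m f) (hg : BRep d m g) :
    BRep d m (f - g) := by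
  have := hf.add (hg.smul (-1 : ℂ))
  simpa [sub_eq_add_neg, neg_one_smul] using this

lemma BRep.sum {d m : ℕ} {ι : Type*} (s : Finset ι) (F : ι → (ℂ × ℂ) → ℂ)
    (h : ∀ i ∈ s, BRep d m (F i)) : BRep d m (fun pt => ∑ i ∈ s, F i pt) := by
  classical
  induction s using Finset.induction_on with
  | empty => simpa [Pi.zero_def] using BRep.zero d m
  | insert x s hx ih =>
    have : (fun pt => ∑ i ∈ insert x s, F i pt)
        = F x + fun pt => ∑ i ∈ s, F i pt := by
      funext pt; simp [Finset.sum_insert hx]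
    rw [this]
    exact (h x (Finset.mem_insert_self _ _)).add (ih fun i hi => h i (Finset.mem_insert_of_mem hi))

lemma BRep.monomial {d m k l : ℕ} (h : k + l < d ∨ (k + l = d ∧ k ≤ m)) :
    BRep d m (fun pt : ℂ × ℂ => pt.1 ^ k * pt.2 ^ l) := by
  refine ⟨Polynomial.C (Polynomial.X ^ l) * Polynomial.X ^ k, fun j => ?_, fun z w => by
    simp [mul_comm]⟩
  rw [Polynomial.coeff_C_mul, Polynomial.coeff_X_pow]
  by_cases hj : j = k
  · subst hj
    rw [if_pos rfl, mul_one, Polynomial.degree_X_pow]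
    have : l < crep d m j := by
      unfold crep
      rcases h with h | ⟨h1, h2⟩
      · split <;> omega
      · rw [if_pos h2]; omega
    exact_mod_cast this
  · simp only [if_neg (Ne.symm (by exact fun he => hj he.symm)), mul_zero, Polynomial.degree_zero]
    exact WithBot.bot_lt_coe _

lemma BRep.sep {d m a b : ℕ} (f g : Polynomial ℂ) (hf : f.natDegree ≤ a)
    (hg : g.degree < (b : WithBot ℕ)) (hab : a + b ≤ d) :
    BRep d m (fun pt : ℂ × ℂ => f.eval pt.1 * g.eval pt.2) := by
  refine ⟨Polynomial.C g * f.map Polynomial.C, fun k => ?_, fun z w => ?_⟩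
  · rw [Polynomial.coeff_C_mul, Polynomial.coeff_map]
    by_cases hk : f.coeff k = 0
    · rw [hk, map_zero, mul_zero, Polynomial.degree_zero]
      exact WithBot.bot_lt_coe _
    · have hk' : k ≤ a := le_trans (Polynomial.le_natDegree_of_ne_zero hk) hf
      have hb : b ≤ crep d m k := by unfold crep; split <;> omega
      refine lt_of_le_of_lt (Polynomial.degree_mul_le _ _)
        (lt_of_lt_of_le (b := (b : WithBot ℕ)) ?_ ?_)
      · calc g.degree + (Polynomial.C (f.coeff k)).degree
            ≤ g.degree + 0 := add_le_add le_rfl Polynomial.degree_C_le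
          _ = g.degree := add_zero _
          _ < (b : WithBot ℕ) := hg
      · exact_mod_cast hb
  · have : Polynomial.eval (Polynomial.C z) (f.map Polynomial.C) = Polynomial.C (f.eval z) := by
      simp [Polynomial.eval_map, Polynomial.eval₂_eq_sum_range, Polynomial.eval_eq_sum_range,
        map_sum]
    simp [this, mul_comm]

lemma BRep.of_mem_polySpace {d m : ℕ} {L : (ℂ × ℂ) → ℂ}
    (hL : L ∈ PolySpace d m) : BRep d m L := by
  induction hL using Submodule.span_induction with
  | mem x hx =>
    obtain ⟨k, l, hkl, rfl⟩ := hx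
    exact BRep.monomial hkl
  | zero => exact BRep.zero d m
  | add x y _ _ hx hy => exact hx.add hy
  | smul a x _ hx => exact hx.smul a

noncomputable def lagPoly (e : ℂ) (η : ℕ → ℂ) (s : Finset ℕ) : Polynomial ℂ :=
  ∏ i ∈ s, (Polynomial.C ((e - η i)⁻¹) * (Polynomial.X - Polynomial.C (η i)))

lemma lagPoly_eval (e : ℂ) (η : ℕ → ℂ) (s : Finset ℕ) (z : ℂ) :
    (lagPoly e η s).eval z = ∏ i ∈ s, (z - η i) / (e - η i) := by
  unfold lagPoly
  rw [Polynomial.eval_prod]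
  refine Finset.prod_congr rfl fun i _ => ?_
  simp [div_eq_mul_inv, mul_comm]

lemma lagPoly_natDegree_le (e : ℂ) (η : ℕ → ℂ) (s : Finset ℕ) :
    (lagPoly e η s).natDegree ≤ s.card := by
  unfold lagPoly
  refine le_trans (Polynomial.natDegree_prod_le _ _) ?_
  have h1 : ∀ i ∈ s,
      (Polynomial.C ((e - η i)⁻¹) * (Polynomial.X - Polynomial.C (η i))).natDegree ≤ 1 := by
    intro i _
    refine le_trans Polynomial.natDegree_mul_le ?_
    simp [Polynomial.natDegree_X_sub_C]
  refine le_trans (Finset.sum_le_sum h1) (by simp)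

lemma BRep.lag {d m : ℕ} (η' θ' : ℕ → ℂ) (e1 e2 : ℂ) (s t : Finset ℕ) (a b : ℕ)
    (hs : s.card ≤ a) (ht : t.card < b) (hab : a + b ≤ d) :
    BRep d m (fun pt : ℂ × ℂ =>
      (∏ i ∈ s, (pt.1 - η' i) / (e1 - η' i)) * (∏ j ∈ t, (pt.2 - θ' j) / (e2 - θ' j))) := by
  have h := BRep.sep (d := d) (m := m) (lagPoly e1 η' s) (lagPoly e2 θ' t)
    (le_trans (lagPoly_natDegree_le _ _ _) hs)
    (lt_of_le_of_lt Polynomial.degree_le_natDegree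
      (by exact_mod_cast lt_of_le_of_lt (lagPoly_natDegree_le _ _ _) ht)) hab
  have he : (fun pt : ℂ × ℂ =>
      (∏ i ∈ s, (pt.1 - η' i) / (e1 - η' i)) * (∏ j ∈ t, (pt.2 - θ' j) / (e2 - θ' j)))
      = fun pt : ℂ × ℂ => (lagPoly e1 η' s).eval pt.1 * (lagPoly e2 θ' t).eval pt.2 := by
    funext pt; rw [lagPoly_eval, lagPoly_eval]
  rw [he]; exact h

lemma aux_prod_zero (η : ℕ → ℂ) (e : ℂ) (s : Finset ℕ) (k : ℕ) (hk : k ∈ s) :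
    (∏ i ∈ s, (η k - η i) / (e - η i)) = 0 :=
  Finset.prod_eq_zero hk (by rw [sub_self, zero_div])

lemma aux_prod_one (η : ℕ → ℂ) (e : ℂ) (s : Finset ℕ) (he : ∀ i ∈ s, e ≠ η i) :
    (∏ i ∈ s, (e - η i) / (e - η i)) = 1 :=
  Finset.prod_eq_one fun i hi => div_self (sub_ne_zero.mpr (he i hi))

lemma aux_telescope (u : ℕ → ℂ) (R : ℕ) :
    ∑ r ∈ Finset.Icc 1 R, (u (r+1) - u r) = u (R+1) - u 1 := by
  have h0 : Finset.Icc 1 R = Finset.Ico 1 (R+1) := by rw [Finset.Ico_add_one_right_eq_Icc]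
  rw [h0, Finset.sum_Ico_eq_sum_range]
  have := Finset.sum_range_sub (fun i => u (i+1)) R
  simpa [add_comm, add_assoc, add_left_comm] using this

end Aux

/-- in the bidimensional intertwining setting, for a point
`(η_p, θ_q) ∈ Ω_N` with `p+q ≤ d−2` and `p ≥ m+1`,
the FLIP is given by the explicit formula with one correcting sum. -/
theorem statement16 (η θ : ℕ → ℂ)
    (hη : Function.Injective η) (hθ : Function.Injective θ)
    (N d m : ℕ) (hN : 1 ≤ N)
    (hlow : d * (d + 1) / 2 < N) (hhigh : N ≤ (d + 1) * (d + 2) / 2)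
    (hm : N = d * (d + 1) / 2 + 1 + m)
    (p q : ℕ) (hpq : p + q + 2 ≤ d) (hp : m + 1 ≤ p) :
    ∀ L : (ℂ × ℂ) → ℂ, IsFLIP η θ d m p q L →
      ∀ z w : ℂ,
        L (z, w) =
          (∏ i ∈ range p, (z - η i) / (η p - η i)) *
              (∏ j ∈ (range (d - p)).erase q, (w - θ j) / (θ q - θ j))
            - (∏ i ∈ range p, (z - η i) / (η p - η i)) *
                (∏ j ∈ (range (d - p - 1)).erase q, (w - θ j) / (θ q - θ j))
            + (∏ i ∈ (range (p + 2)).erase p, (z - η i) / (η p - η i)) *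
                (∏ j ∈ (range (d - p - 1)).erase q, (w - θ j) / (θ q - θ j))
            + (∑ r ∈ Finset.Icc 1 (d - p - q - 2),
                ((∏ i ∈ (range (p + r + 2)).erase p, (z - η i) / (η p - η i)) *
                    (∏ j ∈ (range (d - p - r - 1)).erase q, (w - θ j) / (θ q - θ j))
                  - (∏ i ∈ (range (p + r + 1)).erase p, (z - η i) / (η p - η i)) *
                      (∏ j ∈ (range (d - p - r - 1)).erase q,
                        (w - θ j) / (θ q - θ j)))) := by
  intro L hL z w
  have hmd : m ≤ d := by omega
  -- the explicit right-hand side as a function on ℂ²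
  set Φ : (ℂ × ℂ) → ℂ := fun pt =>
    (∏ i ∈ range p, (pt.1 - η i) / (η p - η i)) *
        (∏ j ∈ (range (d - p)).erase q, (pt.2 - θ j) / (θ q - θ j))
      - (∏ i ∈ range p, (pt.1 - η i) / (η p - η i)) *
          (∏ j ∈ (range (d - p - 1)).erase q, (pt.2 - θ j) / (θ q - θ j))
      + (∏ i ∈ (range (p + 2)).erase p, (pt.1 - η i) / (η p - η i)) *
          (∏ j ∈ (range (d - p - 1)).erase q, (pt.2 - θ j) / (θ q - θ j))
      + (∑ r ∈ Finset.Icc 1 (d - p - q - 2),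
          ((∏ i ∈ (range (p + r + 2)).erase p, (pt.1 - η i) / (η p - η i)) *
              (∏ j ∈ (range (d - p - r - 1)).erase q, (pt.2 - θ j) / (θ q - θ j))
            - (∏ i ∈ (range (p + r + 1)).erase p, (pt.1 - η i) / (η p - η i)) *
                (∏ j ∈ (range (d - p - r - 1)).erase q, (pt.2 - θ j) / (θ q - θ j))))
    with hΦdef
  -- point-value helpers
  have hE0 : ∀ k, k < p → (∏ i ∈ range p, (η k - η i) / (η p - η i)) = 0 :=
    fun k hk => aux_prod_zero η (η p) _ k (Finset.mem_range.mpr hk)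
  have hEp : (∏ i ∈ range p, (η p - η i) / (η p - η i)) = 1 := by
    refine aux_prod_one η (η p) _ fun i hi he => ?_
    rw [Finset.mem_range] at hi; have := hη he; omega
  have hF0 : ∀ t k, k < t → k ≠ p →
      (∏ i ∈ (range t).erase p, (η k - η i) / (η p - η i)) = 0 :=
    fun t k hk hkp => aux_prod_zero η (η p) _ k
      (Finset.mem_erase.mpr ⟨hkp, Finset.mem_range.mpr hk⟩)
  have hF1 : ∀ t, (∏ i ∈ (range t).erase p, (η p - η i) / (η p - η i)) = 1 := by
    intro t
    refine aux_prod_one η (η p) _ fun i hi he => ?_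
    rw [Finset.mem_erase] at hi; exact hi.1 (hη he).symm
  have hG0 : ∀ s l, l < s → l ≠ q →
      (∏ j ∈ (range s).erase q, (θ l - θ j) / (θ q - θ j)) = 0 :=
    fun s l hl hlq => aux_prod_zero θ (θ q) _ l
      (Finset.mem_erase.mpr ⟨hlq, Finset.mem_range.mpr hl⟩)
  have hG1 : ∀ s, (∏ j ∈ (range s).erase q, (θ q - θ j) / (θ q - θ j)) = 1 := by
    intro s
    refine aux_prod_one θ (θ q) _ fun j hj he => ?_
    rw [Finset.mem_erase] at hj; exact hj.1 (hθ he).symm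
  -- value of Φ at the grid points
  have hΦpq : Φ (η p, θ q) = 1 := by
    rw [hΦdef]
    simp only
    rw [hEp, hF1, hG1, hG1,
      Finset.sum_eq_zero (fun r _ => by rw [hF1, hF1, hG1]; ring)]
    ring
  have hΦ0 : ∀ k l, BidIdx d m (k, l) → (k, l) ≠ (p, q) → Φ (η k, θ l) = 0 := by
    intro k l hBid hne
    have hBid' : k + l < d ∨ (k + l = d ∧ k ≤ m) := hBid
    rw [hΦdef]
    simp only
    rcases Nat.lt_trichotomy k p with hkp | hkp | hkp
    · -- k < p : every z-product vanishes
      rw [hE0 k hkp, hF0 (p+2) k (by omega) (by omega),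
        Finset.sum_eq_zero (fun r hr => by
          rw [hF0 (p+r+2) k (by omega) (by omega), hF0 (p+r+1) k (by omega) (by omega)]; ring)]
      ring
    · -- k = p
      rw [hkp] at hne hBid' ⊢
      have hlq : l ≠ q := fun h => hne (by rw [h])
      have hld : l < d - p := by omega
      rw [hEp, hF1 (p+2),
        Finset.sum_eq_zero (fun r _ => by rw [hF1, hF1]; ring),
        hG0 (d - p) l hld hlq]
      ring
    · -- k > p
      by_cases hlq : l = q
      · subst hlq
        have hkd : k < d - l := by omega
        rw [hG1, hG1]
        have hsum : ∑ r ∈ Finset.Icc 1 (d - p - l - 2),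
            ((∏ i ∈ (range (p + r + 2)).erase p, (η k - η i) / (η p - η i)) *
                (∏ j ∈ (range (d - p - r - 1)).erase l, (θ l - θ j) / (θ l - θ j))
              - (∏ i ∈ (range (p + r + 1)).erase p, (η k - η i) / (η p - η i)) *
                  (∏ j ∈ (range (d - p - r - 1)).erase l, (θ l - θ j) / (θ l - θ j)))
            = (∏ i ∈ (range (p + (d - p - l - 2) + 2)).erase p, (η k - η i) / (η p - η i))
              - (∏ i ∈ (range (p + 2)).erase p, (η k - η i) / (η p - η i)) := by
          have hcongr : ∀ r ∈ Finset.Icc 1 (d - p - l - 2),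
              ((∏ i ∈ (range (p + r + 2)).erase p, (η k - η i) / (η p - η i)) *
                  (∏ j ∈ (range (d - p - r - 1)).erase l, (θ l - θ j) / (θ l - θ j))
                - (∏ i ∈ (range (p + r + 1)).erase p, (η k - η i) / (η p - η i)) *
                    (∏ j ∈ (range (d - p - r - 1)).erase l, (θ l - θ j) / (θ l - θ j)))
              = (fun s => ∏ i ∈ (range (p + s + 1)).erase p, (η k - η i) / (η p - η i)) (r+1)
                - (fun s => ∏ i ∈ (range (p + s + 1)).erase p, (η k - η i) / (η p - η i)) r := by
            intro r _
            simp only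
            rw [hG1]
            have : p + r + 1 + 1 = p + (r + 1) + 1 := by ring
            rw [mul_one, mul_one, ← this]
          rw [Finset.sum_congr rfl hcongr,
            aux_telescope (fun s => ∏ i ∈ (range (p + s + 1)).erase p, (η k - η i) / (η p - η i))]
          have h1 : p + (d - p - l - 2 + 1) + 1 = p + (d - p - l - 2) + 2 := by ring
          have h2 : p + 1 + 1 = p + 2 := by ring
          rw [h1, h2]
        rw [hsum]
        have hlast : p + (d - p - l - 2) + 2 = d - l := by omega
        rw [hlast, hF0 (d - l) k hkd (by omega)]
        ring
      · -- k > p, l ≠ q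
        have hld : l < d - p - 1 := by omega
        rw [hG0 (d - p) l (by omega) hlq, hG0 (d - p - 1) l hld hlq,
          Finset.sum_eq_zero (fun r hr => ?_)]
        · ring
        · rw [Finset.mem_Icc] at hr
          by_cases hcase : l < d - p - r - 1
          · rw [hG0 (d - p - r - 1) l hcase hlq]; ring
          · rw [hF0 (p+r+2) k (by omega) (by omega), hF0 (p+r+1) k (by omega) (by omega)]
            ring
  -- Φ is representable with the degree profile of 𝒫_N
  have hq1 : q < d - p := by omega
  have hq2 : q < d - p - 1 := by omega
  have hΦrep : BRep d m Φ := by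
    rw [hΦdef]
    have T1 := BRep.lag (d := d) (m := m) η θ (η p) (θ q) (range p)
      ((range (d - p)).erase q) p (d - p)
      (by rw [Finset.card_range]) (by
        rw [Finset.card_erase_of_mem (Finset.mem_range.mpr hq1), Finset.card_range]; omega)
      (by omega)
    have T2 := BRep.lag (d := d) (m := m) η θ (η p) (θ q) (range p)
      ((range (d - p - 1)).erase q) p (d - p - 1)
      (by rw [Finset.card_range]) (by
        rw [Finset.card_erase_of_mem (Finset.mem_range.mpr hq2), Finset.card_range]; omega)
      (by omega)
    have T3 := BRep.lag (d := d) (m := m) η θ (η p) (θ q) ((range (p + 2)).erase p)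
      ((range (d - p - 1)).erase q) (p + 1) (d - p - 1)
      (by rw [Finset.card_erase_of_mem (Finset.mem_range.mpr (by omega)),
          Finset.card_range]; omega) (by
        rw [Finset.card_erase_of_mem (Finset.mem_range.mpr hq2), Finset.card_range]; omega)
      (by omega)
    have T4 : BRep d m (fun pt : ℂ × ℂ => ∑ r ∈ Finset.Icc 1 (d - p - q - 2),
        ((∏ i ∈ (range (p + r + 2)).erase p, (pt.1 - η i) / (η p - η i)) *
            (∏ j ∈ (range (d - p - r - 1)).erase q, (pt.2 - θ j) / (θ q - θ j))
          - (∏ i ∈ (range (p + r + 1)).erase p, (pt.1 - η i) / (η p - η i)) *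
              (∏ j ∈ (range (d - p - r - 1)).erase q, (pt.2 - θ j) / (θ q - θ j)))) := by
      refine BRep.sum _ _ fun r hr => ?_
      rw [Finset.mem_Icc] at hr
      have hqr : q < d - p - r - 1 := by omega
      have S1 := BRep.lag (d := d) (m := m) η θ (η p) (θ q) ((range (p + r + 2)).erase p)
        ((range (d - p - r - 1)).erase q) (p + r + 1) (d - p - r - 1)
        (by rw [Finset.card_erase_of_mem (Finset.mem_range.mpr (by omega)),
            Finset.card_range]; omega) (by
          rw [Finset.card_erase_of_mem (Finset.mem_range.mpr hqr), Finset.card_range]; omega)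
        (by omega)
      have S2 := BRep.lag (d := d) (m := m) η θ (η p) (θ q) ((range (p + r + 1)).erase p)
        ((range (d - p - r - 1)).erase q) (p + r + 1) (d - p - r - 1)
        (by rw [Finset.card_erase_of_mem (Finset.mem_range.mpr (by omega)),
            Finset.card_range]; omega) (by
          rw [Finset.card_erase_of_mem (Finset.mem_range.mpr hqr), Finset.card_range]; omega)
        (by omega)
      exact S1.sub S2
    exact ((T1.sub T2).add T3).add T4
  -- the difference is representable and vanishes on the whole grid, hence is zero
  have hLrep : BRep d m L := BRep.of_mem_polySpace hL.1
  obtain ⟨P, hPdeg, hPe⟩ := hLrep.sub hΦrep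
  have hc : ∀ k, crep d m (k+1) ≤ crep d m k := by
    intro k; unfold crep; split <;> split <;> omega
  have hK : ∀ k, d + 1 ≤ k → crep d m k = 0 := by
    intro k hk; unfold crep; split <;> omega
  have hP0 : P = 0 := by
    refine aux_unisolv (d+1) (crep d m) η θ hη hθ hc hK P hPdeg ?_
    intro k l hkd hl
    have hBid : BidIdx d m (k, l) := by
      have hl' : l < crep d m k := hl
      unfold crep at hl'
      unfold BidIdx
      simp only
      split at hl' <;> omega
    rw [← hPe (η k) (θ l)]
    by_cases hkl : (k, l) = (p, q)
    · have hk : k = p := congrArg Prod.fst hkl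
      have hlq : l = q := congrArg Prod.snd hkl
      subst hk; subst hlq
      show L (η k, θ l) - Φ (η k, θ l) = 0
      rw [hL.2.1, hΦpq]; ring
    · show L (η k, θ l) - Φ (η k, θ l) = 0
      rw [hL.2.2 k l hBid hkl, hΦ0 k l hBid hkl]; ring
  have hfin : L (z, w) - Φ (z, w) = 0 := by
    have := hPe z w
    rw [hP0] at this
    simpa using this
  have : L (z, w) = Φ (z, w) := by linear_combination hfin
  rw [this, hΦdef]
end
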